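/- arXiv:2503.02513 — 6 statements merged into one kernel-verified Lean document; each statement's English description precedes it below -/
import Mathlib

section
/- After any sequence of forward push operations starting from the standard initialization at node s, the residue values satisfy r_s^(ℓ)(u) ≤ p^(ℓ)(s,u) for all nodes u and all 0 ≤ ℓ ≤ L. -/
open Matrix Finset

/-- The random-walk transition matrix `P = A D⁻¹` of a graph. -/
noncomputable def transP {V : Type*} [Fintype V] [DecidableEq V]
    (G : SimpleGraph V) [DecidableRel G.Adj] : Matrix V V ℝ :=
  G.adjMatrix ℝ * (Matrix.diagonal fun v => (G.degree v : ℝ))⁻¹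

/-- `ℓ`-step transition probability from `s` to `t`: the `(t, s)` entry of `P ^ ℓ`. -/
noncomputable def stepProb {V : Type*} [Fintype V] [DecidableEq V]
    (G : SimpleGraph V) [DecidableRel G.Adj] (ℓ : ℕ) (s t : V) : ℝ :=
  ((transP G) ^ ℓ) t s

/-- The standard initialization of the forward-push state for source `s`:
all reserves `q` are `0`, the residue is `r⁽⁰⁾ = e_s` and `r⁽ℓ⁾ = 0` for `ℓ ≥ 1`.
The first component is the family of reserve vectors `q⁽ℓ⁾`, the second
the family of residue vectors `r⁽ℓ⁾`. -/
noncomputable def pushInit {V : Type*} [DecidableEq V] (s : V) :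
    (ℕ → V → ℝ) × (ℕ → V → ℝ) :=
  (fun _ _ => 0, fun k v => if k = 0 ∧ v = s then 1 else 0)

/-- One forward push operation at node `u` and level `ℓ`:
`q⁽ℓ⁾(u) += r⁽ℓ⁾(u)`; for each neighbor `v` of `u`, `r⁽ℓ⁺¹⁾(v) += r⁽ℓ⁾(u)/d(u)`;
finally `r⁽ℓ⁾(u) := 0`. -/
noncomputable def pushOp {V : Type*} [Fintype V] [DecidableEq V]
    (G : SimpleGraph V) [DecidableRel G.Adj]
    (σ : (ℕ → V → ℝ) × (ℕ → V → ℝ)) (u : V) (ℓ : ℕ) :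
    (ℕ → V → ℝ) × (ℕ → V → ℝ) :=
  (fun k v => if k = ℓ ∧ v = u then σ.1 k v + σ.2 ℓ u else σ.1 k v,
   fun k v =>
     if k = ℓ ∧ v = u then 0
     else if k = ℓ + 1 ∧ G.Adj u v then σ.2 k v + σ.2 ℓ u / (G.degree u : ℝ)
     else σ.2 k v)

/-- The state after performing a given sequence of forward push operations. -/
noncomputable def pushRun {V : Type*} [Fintype V] [DecidableEq V]
    (G : SimpleGraph V) [DecidableRel G.Adj]
    (σ₀ : (ℕ → V → ℝ) × (ℕ → V → ℝ)) (ops : List (V × ℕ)) :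
    (ℕ → V → ℝ) × (ℕ → V → ℝ) :=
  ops.foldl (fun σ op => pushOp G σ op.1 op.2) σ₀

section Aux
variable {V : Type*} [Fintype V] [DecidableEq V] (G : SimpleGraph V) [DecidableRel G.Adj]

lemma aux_diag_inv (hdeg : ∀ v : V, 0 < G.degree v) :
    (Matrix.diagonal fun v => (G.degree v : ℝ))⁻¹
      = Matrix.diagonal fun v => ((G.degree v : ℝ))⁻¹ := by
  refine Matrix.inv_eq_right_inv ?_
  rw [Matrix.diagonal_mul_diagonal]
  have h : ∀ v : V, (G.degree v : ℝ) * ((G.degree v : ℝ))⁻¹ = 1 := fun v =>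
    mul_inv_cancel₀ (show (G.degree v:ℝ) ≠ 0 from (Nat.cast_pos.mpr (hdeg v)).ne')
  simp only [h, Matrix.diagonal_one]

lemma aux_transP_apply (hdeg : ∀ v : V, 0 < G.degree v) (t s : V) :
    transP G t s = (if G.Adj s t then (1:ℝ) else 0) * ((G.degree s : ℝ))⁻¹ := by
  simp [transP, aux_diag_inv G hdeg, Matrix.mul_diagonal,
    SimpleGraph.adjMatrix_apply, SimpleGraph.adj_comm]

lemma aux_stepProb_zero (s t : V) : stepProb G 0 s t = if t = s then (1:ℝ) else 0 := by
  simp [stepProb, Matrix.one_apply]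

lemma aux_stepProb_succ (hdeg : ∀ v : V, 0 < G.degree v) (j : ℕ) (u t : V) :
    stepProb G (j+1) u t
      = ∑ v ∈ G.neighborFinset u, stepProb G j v t * ((G.degree u : ℝ))⁻¹ := by
  unfold stepProb
  rw [pow_succ, Matrix.mul_apply]
  rw [SimpleGraph.neighborFinset_eq_filter, Finset.sum_filter]
  refine Finset.sum_congr rfl fun v _ => ?_
  rw [aux_transP_apply G hdeg]
  split_ifs <;> ring

lemma aux_stepProb_nonneg (hdeg : ∀ v : V, 0 < G.degree v) (ℓ : ℕ) (s t : V) :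
    0 ≤ stepProb G ℓ s t := by
  induction ℓ generalizing s t with
  | zero => rw [aux_stepProb_zero]; positivity
  | succ j ih =>
    rw [aux_stepProb_succ G hdeg]
    exact Finset.sum_nonneg fun v _ => mul_nonneg (ih v t) (by positivity)

/-- The push invariant. -/
def PushGood (s : V) (σ : (ℕ → V → ℝ) × (ℕ → V → ℝ)) : Prop :=
  (∀ k v, 0 ≤ σ.1 k v) ∧ (∀ k v, 0 ≤ σ.2 k v) ∧
  ∀ ℓ : ℕ, ∀ t : V, stepProb G ℓ s t
      = σ.1 ℓ t + ∑ k ∈ Finset.range (ℓ+1), ∑ v : V, σ.2 k v * stepProb G (ℓ-k) v t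

lemma aux_init_good (s : V) : PushGood G s (pushInit s) := by
  refine ⟨fun k v => le_refl 0, fun k v => by dsimp [pushInit]; split_ifs <;> norm_num,
    fun ℓ t => ?_⟩
  simp only [pushInit, ite_mul, one_mul, zero_mul, zero_add]
  rw [Finset.sum_comm]
  simp [ite_and, Finset.sum_ite_eq]

lemma aux_push_good (hdeg : ∀ v : V, 0 < G.degree v) (s : V)
    (σ : (ℕ → V → ℝ) × (ℕ → V → ℝ)) (hσ : PushGood G s σ) (u : V) (m : ℕ) :
    PushGood G s (pushOp G σ u m) := by
  obtain ⟨hq, hr, hid⟩ := hσ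
  have hd : (0:ℝ) < (G.degree u : ℝ) := Nat.cast_pos.mpr (hdeg u)
  refine ⟨?_, ?_, ?_⟩
  · intro k v
    dsimp [pushOp]
    split_ifs with h1
    · exact add_nonneg (hq k v) (hr m u)
    · exact hq k v
  · intro k v
    dsimp [pushOp]
    split_ifs with h1 h2
    · exact le_refl 0
    · exact add_nonneg (hr k v) (div_nonneg (hr m u) hd.le)
    · exact hr k v
  · intro ℓ t
    have hr' : ∀ k v, (pushOp G σ u m).2 k v
        = σ.2 k v + ((if k = m ∧ v = u then -σ.2 m u else 0)
            + (if k = m + 1 ∧ G.Adj u v then σ.2 m u / (G.degree u : ℝ) else 0)) := by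
      intro k v
      by_cases h1 : k = m ∧ v = u
      · have h2 : ¬ (k = m + 1 ∧ G.Adj u v) := by
          rintro ⟨h2, -⟩; have := h1.1; omega
        simp only [pushOp, if_pos h1, if_neg h2, add_zero]
        rw [h1.1, h1.2]; ring
      · simp only [pushOp, if_neg h1]
        by_cases h2 : k = m + 1 ∧ G.Adj u v
        · simp only [if_pos h2]; ring
        · simp only [if_neg h2]; ring
    have hq' : (pushOp G σ u m).1 ℓ t
        = σ.1 ℓ t + (if ℓ = m ∧ t = u then σ.2 m u else 0) := by
      dsimp only [pushOp]
      split_ifs with h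
      · rfl
      · ring
    -- the sum with new residues
    have key : ∑ k ∈ Finset.range (ℓ+1), ∑ v : V, (pushOp G σ u m).2 k v * stepProb G (ℓ-k) v t
        = (∑ k ∈ Finset.range (ℓ+1), ∑ v : V, σ.2 k v * stepProb G (ℓ-k) v t)
          + ((if m ≤ ℓ then -σ.2 m u * stepProb G (ℓ-m) u t else 0)
            + (if m+1 ≤ ℓ then σ.2 m u * stepProb G (ℓ-m) u t else 0)) := by
      have step1 : ∀ k, ∑ v : V, (pushOp G σ u m).2 k v * stepProb G (ℓ-k) v t
          = (∑ v : V, σ.2 k v * stepProb G (ℓ-k) v t)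
            + ((if k = m then -σ.2 m u * stepProb G (ℓ-k) u t else 0)
              + (if k = m+1 then
                  ∑ v ∈ G.neighborFinset u,
                    σ.2 m u / (G.degree u : ℝ) * stepProb G (ℓ-k) v t else 0)) := by
        intro k
        have e1 : ∑ v : V, (pushOp G σ u m).2 k v * stepProb G (ℓ-k) v t
            = ∑ v : V, (σ.2 k v * stepProb G (ℓ-k) v t
                + ((if k = m ∧ v = u then -σ.2 m u else 0) * stepProb G (ℓ-k) v t
                  + (if k = m + 1 ∧ G.Adj u v then σ.2 m u / (G.degree u : ℝ) else 0)
                      * stepProb G (ℓ-k) v t)) := by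
          refine Finset.sum_congr rfl fun v _ => ?_
          rw [hr' k v]; ring
        rw [e1, Finset.sum_add_distrib, Finset.sum_add_distrib]
        congr 1
        congr 1
        · by_cases hk : k = m
          · simp [hk, ite_and, ite_mul, Finset.sum_ite_eq']
          · simp [hk, ite_and, ite_mul]
        · by_cases hk : k = m + 1
          · simp only [hk, if_pos rfl, true_and, ite_and, if_true]
            rw [SimpleGraph.neighborFinset_eq_filter, Finset.sum_filter]
            refine Finset.sum_congr rfl fun v _ => ?_
            simp [ite_mul]
          · simp [hk, ite_and, ite_mul]
      calc ∑ k ∈ Finset.range (ℓ+1), ∑ v : V, (pushOp G σ u m).2 k v * stepProb G (ℓ-k) v t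
          = ∑ k ∈ Finset.range (ℓ+1),
            ((∑ v : V, σ.2 k v * stepProb G (ℓ-k) v t)
              + ((if k = m then -σ.2 m u * stepProb G (ℓ-k) u t else 0)
                + (if k = m+1 then
                    ∑ v ∈ G.neighborFinset u,
                      σ.2 m u / (G.degree u : ℝ) * stepProb G (ℓ-k) v t else 0))) :=
            Finset.sum_congr rfl fun k _ => step1 k
        _ = (∑ k ∈ Finset.range (ℓ+1), ∑ v : V, σ.2 k v * stepProb G (ℓ-k) v t)
            + ((∑ k ∈ Finset.range (ℓ+1),
                if k = m then -σ.2 m u * stepProb G (ℓ-k) u t else 0)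
              + (∑ k ∈ Finset.range (ℓ+1),
                if k = m+1 then
                  ∑ v ∈ G.neighborFinset u,
                    σ.2 m u / (G.degree u : ℝ) * stepProb G (ℓ-k) v t else 0)) := by
            rw [Finset.sum_add_distrib, Finset.sum_add_distrib]
        _ = (∑ k ∈ Finset.range (ℓ+1), ∑ v : V, σ.2 k v * stepProb G (ℓ-k) v t)
            + ((if m ≤ ℓ then -σ.2 m u * stepProb G (ℓ-m) u t else 0)
              + (if m+1 ≤ ℓ then σ.2 m u * stepProb G (ℓ-m) u t else 0)) := by
            congr 1
            congr 1
            · rw [Finset.sum_ite_eq' (Finset.range (ℓ+1))]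
              simp [Nat.lt_succ_iff]
            · rw [Finset.sum_ite_eq' (Finset.range (ℓ+1))]
              simp only [Finset.mem_range, Nat.lt_succ_iff]
              by_cases hm : m + 1 ≤ ℓ
              · rw [if_pos hm, if_pos hm]
                have hsub : ℓ - m = (ℓ - (m+1)) + 1 := by omega
                rw [hsub, aux_stepProb_succ G hdeg, Finset.mul_sum]
                refine Finset.sum_congr rfl fun v _ => ?_
                rw [div_eq_mul_inv]; ring
              · rw [if_neg hm, if_neg hm]
    rw [hid ℓ t, hq', key]
    rcases lt_trichotomy ℓ m with hlm | hlm | hlm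
    · have h1 : ¬ (ℓ = m ∧ t = u) := by rintro ⟨h, -⟩; omega
      rw [if_neg h1, if_neg (by omega : ¬ m ≤ ℓ), if_neg (by omega : ¬ m + 1 ≤ ℓ)]
      ring
    · subst hlm
      rw [if_pos le_rfl, if_neg (by omega : ¬ ℓ + 1 ≤ ℓ), Nat.sub_self,
        aux_stepProb_zero]
      by_cases ht : t = u
      · subst ht
        rw [if_pos ⟨rfl, rfl⟩, if_pos rfl]
        ring
      · have h1 : ¬ (ℓ = ℓ ∧ t = u) := fun h => ht h.2
        rw [if_neg h1, if_neg ht]; ring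
    · have h1 : ¬ (ℓ = m ∧ t = u) := by rintro ⟨h, -⟩; omega
      rw [if_neg h1, if_pos (by omega : m ≤ ℓ), if_pos (by omega : m + 1 ≤ ℓ)]
      ring
end Aux


lemma aux_run_good {V : Type*} [Fintype V] [DecidableEq V]
    (G : SimpleGraph V) [DecidableRel G.Adj]
    (hdeg : ∀ v : V, 0 < G.degree v) (s : V) (ops : List (V × ℕ)) :
    PushGood G s (pushRun G (pushInit s) ops) := by
  suffices h : ∀ σ, PushGood G s σ → PushGood G s (pushRun G σ ops) from
    h _ (aux_init_good G s)
  induction ops with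
  | nil => exact fun σ h => h
  | cons op rest ih =>
    exact fun σ h => ih _ (aux_push_good G hdeg s σ h op.1 op.2)

/-- Residue upper bound -/
theorem residue_le_stepProb {V : Type*} [Fintype V] [DecidableEq V]
    (G : SimpleGraph V) [DecidableRel G.Adj]
    (hdeg : ∀ v : V, 0 < G.degree v) (s : V) (L : ℕ) (ops : List (V × ℕ)) :
    ∀ ℓ ≤ L, ∀ u : V,
      (pushRun G (pushInit s) ops).2 ℓ u ≤ stepProb G ℓ s u := by
  intro ℓ _ u
  obtain ⟨hq, hr, hid⟩ := aux_run_good G hdeg s ops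
  set σ := pushRun G (pushInit s) ops with hσ
  have h0 : stepProb G 0 u u = 1 := by rw [aux_stepProb_zero]; simp
  calc σ.2 ℓ u = σ.2 ℓ u * stepProb G (ℓ - ℓ) u u := by
        rw [Nat.sub_self, h0, mul_one]
    _ ≤ ∑ v : V, σ.2 ℓ v * stepProb G (ℓ - ℓ) v u :=
        Finset.single_le_sum
          (fun v _ => mul_nonneg (hr ℓ v) (aux_stepProb_nonneg G hdeg _ v u))
          (Finset.mem_univ u)
    _ ≤ ∑ k ∈ Finset.range (ℓ+1), ∑ v : V, σ.2 k v * stepProb G (ℓ - k) v u :=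
        Finset.single_le_sum
          (f := fun k => ∑ v : V, σ.2 k v * stepProb G (ℓ - k) v u)
          (fun k _ => Finset.sum_nonneg fun v _ =>
            mul_nonneg (hr k v) (aux_stepProb_nonneg G hdeg _ v u))
          (Finset.mem_range.mpr (Nat.lt_succ_self ℓ))
    _ ≤ σ.1 ℓ u + ∑ k ∈ Finset.range (ℓ+1), ∑ v : V, σ.2 k v * stepProb G (ℓ - k) v u :=
        le_add_of_nonneg_left (hq ℓ u)
    _ = stepProb G ℓ s u := (hid ℓ u).symm
end

section
/- Let G be a connected non-bipartite undirected graph with transition matrix P and let λ = max{λ_2, |λ_n|} < 1 where λ_i are the eigenvalues of P in decreasing order. Then for any nodes s, t and any integer L ≥ ⌈log_{1/λ}( 2(1/d(s)+1/d(t)) / (ε(1−λ)) )⌉, the L-truncated effective resistance satisfies |R(s,t) − R_L(s,t)| ≤ ε/2. -/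
open Matrix Finset

section Aux
variable {V : Type*} [Fintype V] [DecidableEq V]

set_option linter.unusedSectionVars false

lemma aux_dot_sym {M : Matrix V V ℝ} (hM : Mᵀ = M) (a b : V → ℝ) :
    (M *ᵥ a) ⬝ᵥ b = a ⬝ᵥ (M *ᵥ b) := by
  rw [Matrix.dotProduct_mulVec a M b]
  nth_rewrite 2 [← hM]
  rw [Matrix.vecMul_transpose]

lemma aux_quad_entries (M : Matrix V V ℝ) {a b : V} (p q : ℝ) :
    (Pi.single a p - Pi.single b q) ⬝ᵥ M *ᵥ (Pi.single a p - Pi.single b q)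
      = p*p*M a a - p*q*M a b - q*p*M b a + q*q*M b b := by
  simp [sub_dotProduct, dotProduct_sub, Matrix.mulVec_sub, Matrix.mulVec_single,
    single_dotProduct, ]
  ring

lemma aux_pow_eigen {N : Matrix V V ℝ} (hN : N.IsHermitian) (ℓ : ℕ) (i : V) :
    (N ^ ℓ) *ᵥ ⇑(hN.eigenvectorBasis i) = (hN.eigenvalues i ^ ℓ) • ⇑(hN.eigenvectorBasis i) := by
  induction ℓ with
  | zero => simp
  | succ n ih =>
      rw [pow_succ', ← Matrix.mulVec_mulVec, ih, Matrix.mulVec_smul,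
        hN.mulVec_eigenvectorBasis, smul_smul, mul_comm, pow_succ]
      ring_nf

lemma aux_dot_on {N : Matrix V V ℝ} (hN : N.IsHermitian) (i j : V) :
    ⇑(hN.eigenvectorBasis i) ⬝ᵥ ⇑(hN.eigenvectorBasis j) = if i = j then 1 else 0 := by
  have h := orthonormal_iff_ite.mp hN.eigenvectorBasis.orthonormal i j
  simpa [PiLp.inner_apply, dotProduct, RCLike.inner_apply, mul_comm] using h

lemma aux_sum_repr {N : Matrix V V ℝ} (hN : N.IsHermitian) (y : V → ℝ) :
    ∑ i, (⇑(hN.eigenvectorBasis i) ⬝ᵥ y) • ⇑(hN.eigenvectorBasis i) = y := by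
  have h := hN.eigenvectorBasis.sum_repr' ((WithLp.equiv 2 (V → ℝ)).symm y)
  have h2 := congrArg (WithLp.equiv 2 (V → ℝ)) h
  simpa [PiLp.inner_apply, dotProduct, RCLike.inner_apply, mul_comm] using h2

lemma aux_alg (a b e l : ℝ) (he : e ≠ 0) (hl : l ≠ 0) :
    a * (2 * b / (e * l)) * (e * l / 2) = b * a := by
  field_simp

lemma aux_alg2 (e l : ℝ) (hl : l ≠ 0) : (e * l / 2) / l = e / 2 := by
  field_simp

lemma aux_numeric (lam eps S : ℝ) (hlam0 : 0 < lam) (hlam1 : lam < 1) (heps : 0 < eps)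
    (hS : 0 < S) (L : ℕ)
    (hL : (⌈Real.logb (1/lam) (2 * S / (eps * (1 - lam)))⌉ : ℤ) ≤ (L : ℤ)) :
    S * (lam ^ (L+1) / (1 - lam)) ≤ eps / 2 := by
  have h1lam : (0:ℝ) < 1 - lam := by linarith
  set C : ℝ := 2 * S / (eps * (1 - lam)) with hC_def
  have hCpos : 0 < C := by positivity
  have hlog : Real.logb (1/lam) C ≤ (L:ℝ) := by
    have hceil := Int.le_ceil (Real.logb (1/lam) C)
    have h2' : ((⌈Real.logb (1/lam) C⌉ : ℤ) : ℝ) ≤ ((L:ℤ) : ℝ) := Int.cast_le.mpr hL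
    push_cast at h2'
    linarith
  have hb : (1:ℝ) < 1/lam := by
    rw [lt_div_iff₀ hlam0, one_mul]; exact hlam1
  have hCle : C ≤ (1/lam)^(L:ℝ) := (Real.logb_le_iff_le_rpow hb hCpos).mp hlog
  rw [Real.rpow_natCast, div_pow, one_pow] at hCle
  have hlamL : (0:ℝ) < lam ^ L := by positivity
  have h5 : lam ^ (L+1) * C ≤ 1 := by
    have h6 : lam ^ L * C ≤ 1 := by
      calc lam ^ L * C ≤ lam ^ L * (1 / lam ^ L) :=
            mul_le_mul_of_nonneg_left hCle hlamL.le
        _ = 1 := by field_simp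
    calc lam ^ (L+1) * C = lam * (lam ^ L * C) := by ring
      _ ≤ 1 * 1 := by
          apply mul_le_mul hlam1.le h6 (by positivity) (by norm_num)
      _ = 1 := by norm_num
  have hmain : S * lam ^ (L+1) ≤ eps * (1 - lam) / 2 := by
    have h7 := mul_le_mul_of_nonneg_right h5
      (le_of_lt (by positivity : (0:ℝ) < eps * (1 - lam) / 2))
    have h8 : lam ^ (L+1) * C * (eps * (1 - lam) / 2) = S * lam ^ (L+1) := by
      rw [hC_def]
      field_simp
    rw [h8, one_mul] at h7
    exact h7
  calc S * (lam ^ (L+1) / (1 - lam)) = (S * lam ^ (L+1)) / (1 - lam) :=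
        (mul_div_assoc S _ _).symm
    _ ≤ (eps * (1 - lam) / 2) / (1 - lam) := by gcongr
    _ = eps / 2 := by field_simp

lemma aux_sum_dot (f : V → V → ℝ) (y : V → ℝ) :
    (∑ i, f i) ⬝ᵥ y = ∑ i, f i ⬝ᵥ y := by
  simp only [dotProduct, Finset.sum_apply, Finset.sum_mul]
  rw [Finset.sum_comm]

lemma aux_mulVec_sum' (M : Matrix V V ℝ) (f : V → V → ℝ) :
    M *ᵥ (∑ i, f i) = ∑ i, M *ᵥ (f i) := by
  ext v
  simp [Matrix.mulVec, dotProduct, Finset.sum_apply, Finset.mul_sum]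
  rw [Finset.sum_comm]

lemma aux_quad {N : Matrix V V ℝ} (hN : N.IsHermitian) (y : V → ℝ) (ℓ : ℕ) :
    y ⬝ᵥ (N ^ ℓ) *ᵥ y
      = ∑ i, (⇑(hN.eigenvectorBasis i) ⬝ᵥ y)^2 * (hN.eigenvalues i)^ℓ := by
  set u : V → V → ℝ := fun i => ⇑(hN.eigenvectorBasis i) with hu
  set c : V → ℝ := fun i => u i ⬝ᵥ y with hc
  have hy : ∑ i, c i • u i = y := aux_sum_repr hN y
  have h1 : (N ^ ℓ) *ᵥ y = ∑ i, (c i * hN.eigenvalues i ^ ℓ) • u i := by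
    conv_lhs => rw [← hy]
    rw [aux_mulVec_sum']
    refine Finset.sum_congr rfl fun i _ => ?_
    rw [Matrix.mulVec_smul, aux_pow_eigen hN, smul_smul, mul_comm]
  rw [h1]
  have h2 : y ⬝ᵥ ∑ i, (c i * hN.eigenvalues i ^ ℓ) • u i
      = ∑ i, y ⬝ᵥ ((c i * hN.eigenvalues i ^ ℓ) • u i) := by
    simp [dotProduct, Finset.sum_apply, Finset.mul_sum]
    rw [Finset.sum_comm]
  rw [h2]
  refine Finset.sum_congr rfl fun i _ => ?_
  rw [dotProduct_smul, smul_eq_mul, dotProduct_comm]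
  have : u i ⬝ᵥ y = c i := rfl
  rw [this]; ring

lemma aux_deg_pos {G : SimpleGraph V} [DecidableRel G.Adj]
    (hconn : G.Connected) (hnb : ¬ G.Colorable 2) (v : V) : 0 < G.degree v := by
  rw [SimpleGraph.degree_pos_iff_exists_adj]
  by_contra h
  push_neg at h
  -- there exists an edge somewhere
  by_cases hedge : ∃ a b, G.Adj a b
  · obtain ⟨a, b, hab⟩ := hedge
    have hva : G.Reachable v a := hconn.preconnected v a
    obtain ⟨w⟩ := hva
    cases w with
    | nil => exact h b hab
    | cons hadj _ => exact h _ hadj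
  · push_neg at hedge
    exact hnb ⟨⟨fun _ => 0, fun {a b} hab => absurd hab (hedge a b)⟩⟩

lemma aux_spectrum_conj {N P Dh Di : Matrix V V ℝ}
    (hDhDi : Dh * Di = 1) (hDiDh : Di * Dh = 1) (hN : N = Di * P * Dh)
    {μ : ℝ} (hμ : μ ∈ spectrum ℝ N) : μ ∈ spectrum ℝ P := by
  rw [spectrum.mem_iff] at hμ ⊢
  intro hUnit
  apply hμ
  have key : algebraMap ℝ (Matrix V V ℝ) μ - N
      = Di * (algebraMap ℝ (Matrix V V ℝ) μ - P) * Dh := by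
    rw [hN, Matrix.mul_sub, Matrix.sub_mul]
    congr 1
    rw [Algebra.algebraMap_eq_smul_one, Matrix.mul_smul, Matrix.smul_mul, mul_one,
      hDiDh]
  rw [key]
  have hDi : IsUnit Di := ⟨⟨Di, Dh, hDiDh, hDhDi⟩, rfl⟩
  have hDh : IsUnit Dh := ⟨⟨Dh, Di, hDhDi, hDiDh⟩, rfl⟩
  exact (hDi.mul hUnit).mul hDh

end Aux

/-- Truncation bound: for a connected non-bipartite graph with all non-top
eigenvalues of `P` bounded in modulus by `λ < 1`, if
`L ≥ ⌈log_{1/λ}( 2(1/d(s)+1/d(t)) / (ε(1−λ)) )⌉` then the `L`-truncated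
effective resistance satisfies `|R(s,t) − R_L(s,t)| ≤ ε/2`, where
`R(s,t) = (e_s − e_t)ᵀ L⁺ (e_s − e_t)` with `L⁺` the Moore–Penrose
pseudoinverse of the Laplacian (characterized by the Penrose conditions). -/
theorem truncated_er_error_bound {V : Type*} [Fintype V] [DecidableEq V]
    (G : SimpleGraph V) [DecidableRel G.Adj]
    (hconn : G.Connected) (hnb : ¬ G.Colorable 2)
    (lam : ℝ) (hlam0 : 0 < lam) (hlam1 : lam < 1)
    (hspec : ∀ μ ∈ spectrum ℝ (transP G), μ = 1 ∨ |μ| ≤ lam)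
    (Lplus : Matrix V V ℝ)
    (h1 : G.lapMatrix ℝ * Lplus * G.lapMatrix ℝ = G.lapMatrix ℝ)
    (h2 : Lplus * G.lapMatrix ℝ * Lplus = Lplus)
    (h3 : (G.lapMatrix ℝ * Lplus)ᵀ = G.lapMatrix ℝ * Lplus)
    (h4 : (Lplus * G.lapMatrix ℝ)ᵀ = Lplus * G.lapMatrix ℝ)
    (s t : V) (ε : ℝ) (hε : 0 < ε) (L : ℕ)
    (hL : (⌈Real.logb (1 / lam)
        (2 * (1 / (G.degree s : ℝ) + 1 / (G.degree t : ℝ)) / (ε * (1 - lam)))⌉ : ℤ)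
        ≤ (L : ℤ)) :
    |(Pi.single s 1 - Pi.single t 1) ⬝ᵥ Lplus *ᵥ (Pi.single s 1 - Pi.single t 1)
        - ∑ ℓ ∈ Finset.range (L + 1),
            (stepProb G ℓ s s / (G.degree s : ℝ) - stepProb G ℓ s t / (G.degree t : ℝ)
              - stepProb G ℓ t s / (G.degree s : ℝ) + stepProb G ℓ t t / (G.degree t : ℝ))|
      ≤ ε / 2 := by
  classical
  by_cases hst : s = t
  · subst hst
    simp only [sub_self, zero_dotProduct, dotProduct_zero]
    simp only [zero_sub, neg_add_cancel, Finset.sum_const_zero, zero_sub, abs_neg, abs_zero,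
      neg_zero]
    positivity
  -- main case
  have hdn : ∀ v, 0 < G.degree v := aux_deg_pos hconn hnb
  set d : V → ℝ := fun v => (G.degree v : ℝ) with hd_def
  have hd : ∀ v, 0 < d v := fun v => by
    simp only [hd_def]
    exact_mod_cast hdn v
  set sq : V → ℝ := fun v => Real.sqrt (d v) with hsq_def
  have hsq : ∀ v, 0 < sq v := fun v => Real.sqrt_pos.mpr (hd v)
  have hsqsq : ∀ v, sq v * sq v = d v := fun v => Real.mul_self_sqrt (hd v).le
  set Dh : Matrix V V ℝ := Matrix.diagonal sq with hDh_def
  set Di : Matrix V V ℝ := Matrix.diagonal (fun v => (sq v)⁻¹) with hDi_def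
  have hDhDi : Dh * Di = 1 := by
    rw [hDh_def, hDi_def, Matrix.diagonal_mul_diagonal,
      show (fun v => sq v * (sq v)⁻¹) = fun _ => (1:ℝ) from
        funext fun v => mul_inv_cancel₀ (hsq v).ne', Matrix.diagonal_one]
  have hDiDh : Di * Dh = 1 := by
    rw [hDh_def, hDi_def, Matrix.diagonal_mul_diagonal,
      show (fun v => (sq v)⁻¹ * sq v) = fun _ => (1:ℝ) from
        funext fun v => inv_mul_cancel₀ (hsq v).ne', Matrix.diagonal_one]
  set A : Matrix V V ℝ := G.adjMatrix ℝ with hA_def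
  set N : Matrix V V ℝ := Di * A * Di with hN_def
  have hNsymm : Nᵀ = N := by
    rw [hN_def, hDi_def, hA_def, Matrix.transpose_mul, Matrix.transpose_mul,
      Matrix.diagonal_transpose, SimpleGraph.transpose_adjMatrix, Matrix.mul_assoc]
  have hNherm : N.IsHermitian := by
    have : Nᴴ = N := by
      rw [Matrix.conjTranspose, hNsymm]
      ext i j
      simp [Matrix.map_apply]
    exact this
  have hDinv : (Matrix.diagonal d)⁻¹ = Di * Di := by
    rw [hDi_def, Matrix.diagonal_mul_diagonal]
    refine Matrix.inv_eq_right_inv ?_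
    rw [Matrix.diagonal_mul_diagonal,
      show (fun v => d v * ((sq v)⁻¹ * (sq v)⁻¹)) = fun _ => (1:ℝ) from
        funext fun v => by rw [← hsqsq v]; field_simp [(hsq v).ne'], Matrix.diagonal_one]
  have hP : transP G = Dh * N * Di := by
    rw [transP, ← hA_def, ← hd_def, hDinv, hN_def]
    calc A * (Di * Di) = (Dh * Di) * (A * (Di * Di)) := by rw [hDhDi, Matrix.one_mul]
    _ = Dh * (Di * A * Di) * Di := by noncomm_ring
  have hLap : G.lapMatrix ℝ = Dh * (1 - N) * Dh := by
    have hDhDh : Dh * Dh = Matrix.diagonal d := by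
      rw [hDh_def, Matrix.diagonal_mul_diagonal,
        show (fun v => sq v * sq v) = d from funext hsqsq]
    have hDND : Dh * N * Dh = A := by
      rw [hN_def]
      calc Dh * (Di * A * Di) * Dh = (Dh * Di) * A * (Di * Dh) := by noncomm_ring
        _ = A := by rw [hDhDi, hDiDh, Matrix.one_mul, Matrix.mul_one]
    have hdeg : G.degMatrix ℝ = Matrix.diagonal d := rfl
    calc G.lapMatrix ℝ = G.degMatrix ℝ - A := rfl
      _ = Dh * Dh - Dh * N * Dh := by rw [hDND, hdeg, hDhDh]
      _ = Dh * (1 - N) * Dh := by noncomm_ring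
  have hPpow : ∀ ℓ : ℕ, (transP G)^ℓ = Dh * N^ℓ * Di := by
    intro ℓ
    induction ℓ with
    | zero => rw [pow_zero, pow_zero, Matrix.mul_one, hDhDi]
    | succ n ih =>
        rw [pow_succ, pow_succ, ih, hP]
        calc Dh * N ^ n * Di * (Dh * N * Di)
            = Dh * N ^ n * (Di * Dh) * (N * Di) := by noncomm_ring
          _ = Dh * (N ^ n * N) * Di := by rw [hDiDh, Matrix.mul_one]; noncomm_ring
  set x : V → ℝ := Pi.single s 1 - Pi.single t 1 with hx_def
  set y : V → ℝ := Pi.single s (sq s)⁻¹ - Pi.single t (sq t)⁻¹ with hy_def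
  have hxy : Di *ᵥ x = y := by
    funext v
    rw [hDi_def, Matrix.mulVec_diagonal]
    by_cases hvs : v = s
    · subst hvs; simp [hx_def, hy_def, hst, Pi.single_apply]
    · by_cases hvt : v = t
      · subst hvt; simp [hx_def, hy_def, Ne.symm hst, hvs, Pi.single_apply]
      · simp [hx_def, hy_def, hvs, hvt, Pi.single_apply]
  have hyx : Dh *ᵥ y = x := by
    rw [← hxy, Matrix.mulVec_mulVec, hDhDi, Matrix.one_mulVec]
  -- eigen data
  set u : V → V → ℝ := fun i => ⇑(hNherm.eigenvectorBasis i) with hu_def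
  set μ : V → ℝ := hNherm.eigenvalues with hμ_def
  set c : V → ℝ := fun i => u i ⬝ᵥ y with hc_def
  have hμi : ∀ i, μ i = 1 ∨ |μ i| ≤ lam := by
    intro i
    refine hspec _ (aux_spectrum_conj hDhDi hDiDh ?_ (hNherm.eigenvalues_mem_spectrum_real i))
    rw [hP]
    calc N = 1 * N * 1 := by noncomm_ring
      _ = (Di * Dh) * N * (Di * Dh) := by rw [hDiDh]
      _ = Di * (Dh * N * Di) * Dh := by noncomm_ring
  -- summand identity
  have hsummand : ∀ ℓ : ℕ,
      (stepProb G ℓ s s / d s - stepProb G ℓ s t / d t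
        - stepProb G ℓ t s / d s + stepProb G ℓ t t / d t)
      = ∑ i, (c i)^2 * (μ i)^ℓ := by
    intro ℓ
    have hentry : ∀ a b : V, ((transP G)^ℓ) a b = sq a * (N^ℓ) a b * (sq b)⁻¹ := by
      intro a b
      rw [hPpow ℓ, hDh_def, hDi_def, Matrix.mul_diagonal, Matrix.diagonal_mul]
    have hca : ∀ i : V, ((⇑(hNherm.eigenvectorBasis i) : V → ℝ) ⬝ᵥ y) = c i := fun _ => rfl
    have hμa : ∀ i : V, hNherm.eigenvalues i = μ i := fun _ => rfl
    have hq2 := aux_quad hNherm y ℓ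
    simp_rw [hca, hμa] at hq2
    rw [← hq2, hy_def, aux_quad_entries]
    simp only [stepProb, hentry]
    have keygen : ∀ (p q m : ℝ), 0 < p → 0 < q → p * m * q⁻¹ / (p * p) = p⁻¹ * (q⁻¹ * m) := by
      intro p q m hp hq
      field_simp
    have key : ∀ a b : V, sq a * (N^ℓ) a b * (sq b)⁻¹ / d a
        = (sq a)⁻¹ * ((sq b)⁻¹ * (N^ℓ) a b) := by
      intro a b
      rw [← hsqsq a]
      exact keygen _ _ _ (hsq a) (hsq b)
    rw [key s s, key t s, key s t, key t t]
    ring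
  -- orthogonality to top eigenvector
  have hctop : ∀ i, μ i = 1 → c i = 0 := by
    intro i hi
    have hui : N *ᵥ u i = u i := by
      have h := hNherm.mulVec_eigenvectorBasis i
      have h2 : hNherm.eigenvalues i = 1 := hi
      rw [h2, one_smul] at h
      exact h
    have hker : G.lapMatrix ℝ *ᵥ (Di *ᵥ u i) = 0 := by
      rw [Matrix.mulVec_mulVec, hLap]
      have hm : Dh * (1 - N) * Dh * Di = Dh * (1 - N) := by
        rw [Matrix.mul_assoc (Dh * (1 - N)), hDhDi, Matrix.mul_one]
      rw [hm, ← Matrix.mulVec_mulVec, Matrix.sub_mulVec, Matrix.one_mulVec, hui,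
        sub_self, Matrix.mulVec_zero]
    have hconst : ∀ a b : V, (Di *ᵥ u i) a = (Di *ᵥ u i) b := by
      intro a b
      refine (G.lapMatrix_mulVec_eq_zero_iff_forall_reachable (x := Di *ᵥ u i)).mp ?_
        a b (hconn.preconnected a b)
      exact hker
    set k : ℝ := (Di *ᵥ u i) s with hk
    have huv : ∀ v, u i v = sq v * k := by
      intro v
      have h1 := hconst v s
      rw [hDi_def, Matrix.mulVec_diagonal] at h1
      calc u i v = sq v * ((sq v)⁻¹ * u i v) := by
            rw [← mul_assoc, mul_inv_cancel₀ (hsq v).ne', one_mul]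
        _ = sq v * k := by rw [h1]
    have hcx : c i = k * ∑ v, x v := by
      have : c i = u i ⬝ᵥ y := rfl
      rw [this, dotProduct, Finset.mul_sum]
      refine Finset.sum_congr rfl fun v _ => ?_
      have hyv : y v = (sq v)⁻¹ * x v := by
        rw [← hxy, hDi_def, Matrix.mulVec_diagonal]
      rw [huv v, hyv]
      calc sq v * k * ((sq v)⁻¹ * x v) = (sq v * (sq v)⁻¹) * (k * x v) := by ring
        _ = k * x v := by rw [mul_inv_cancel₀ (hsq v).ne', one_mul]
    have hxsum : ∑ v, x v = 0 := by
      rw [hx_def]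
      simp [Pi.sub_apply, Finset.sum_sub_distrib]
    rw [hcx, hxsum, mul_zero]
  -- value of R
  set g : V → ℝ := fun i => if μ i = 1 then 0 else (1 - μ i)⁻¹ with hg_def
  have hueig : ∀ i, N *ᵥ u i = μ i • u i := fun i => hNherm.mulVec_eigenvectorBasis i
  have hNu : ∀ i, (1 - N) *ᵥ u i = (1 - μ i) • u i := by
    intro i
    rw [Matrix.sub_mulVec, Matrix.one_mulVec, hueig i, sub_smul, one_smul]
  set w : V → ℝ := ∑ i, (g i * c i) • u i with hw_def
  have hNw : (1 - N) *ᵥ w = y := by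
    rw [hw_def, aux_mulVec_sum' _ (fun i => (g i * c i) • u i)]
    have hterm : ∀ i : V, (1 - N) *ᵥ ((g i * c i) • u i) = c i • u i := by
      intro i
      rw [Matrix.mulVec_smul, hNu i, smul_smul]
      by_cases hi : μ i = 1
      · rw [hg_def]
        simp [hi, hctop i hi]
      · have hgi : g i * c i * (1 - μ i) = c i := by
          rw [hg_def]
          simp only [if_neg hi]
          have hne : (1 : ℝ) - μ i ≠ 0 := sub_ne_zero.mpr (Ne.symm hi)
          field_simp
        rw [hgi]
    rw [Finset.sum_congr rfl (fun i _ => hterm i)]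
    exact aux_sum_repr hNherm y
  set z : V → ℝ := Di *ᵥ w with hz_def
  have hLz : G.lapMatrix ℝ *ᵥ z = x := by
    rw [hz_def, Matrix.mulVec_mulVec, hLap]
    have hm : Dh * (1 - N) * Dh * Di = Dh * (1 - N) := by
      rw [Matrix.mul_assoc (Dh * (1 - N)), hDhDi, Matrix.mul_one]
    rw [hm, ← Matrix.mulVec_mulVec, hNw, hyx]
  have hlapsymm : (G.lapMatrix ℝ)ᵀ = G.lapMatrix ℝ := (SimpleGraph.isSymm_lapMatrix ℝ G)
  have hR : x ⬝ᵥ Lplus *ᵥ x = ∑ i, g i * (c i)^2 := by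
    calc x ⬝ᵥ Lplus *ᵥ x = (G.lapMatrix ℝ *ᵥ z) ⬝ᵥ (Lplus *ᵥ x) := by rw [hLz]
      _ = z ⬝ᵥ (G.lapMatrix ℝ *ᵥ (Lplus *ᵥ x)) := aux_dot_sym hlapsymm _ _
      _ = z ⬝ᵥ ((G.lapMatrix ℝ * Lplus) *ᵥ x) := by rw [Matrix.mulVec_mulVec]
      _ = z ⬝ᵥ ((G.lapMatrix ℝ * Lplus) *ᵥ (G.lapMatrix ℝ *ᵥ z)) := by rw [hLz]
      _ = z ⬝ᵥ ((G.lapMatrix ℝ * Lplus * G.lapMatrix ℝ) *ᵥ z) := by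
          rw [Matrix.mulVec_mulVec]
      _ = z ⬝ᵥ (G.lapMatrix ℝ *ᵥ z) := by rw [h1]
      _ = z ⬝ᵥ x := by rw [hLz]
      _ = (Di *ᵥ w) ⬝ᵥ x := by rw [hz_def]
      _ = w ⬝ᵥ (Di *ᵥ x) := aux_dot_sym (by rw [hDi_def, Matrix.diagonal_transpose]) _ _
      _ = w ⬝ᵥ y := by rw [hxy]
      _ = ∑ i, g i * (c i)^2 := by
          rw [hw_def, aux_sum_dot (fun i => (g i * c i) • u i) y]
          refine Finset.sum_congr rfl fun i _ => ?_
          rw [smul_dotProduct, smul_eq_mul]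
          have hci : u i ⬝ᵥ y = c i := rfl
          rw [hci]; ring
  -- assemble
  have hca : ∀ i : V, ((⇑(hNherm.eigenvectorBasis i) : V → ℝ) ⬝ᵥ y) = c i := fun _ => rfl
  have hyy : ∑ i, (c i)^2 = y ⬝ᵥ y := by
    have h0 := aux_quad hNherm y 0
    simp only [pow_zero, Matrix.one_mulVec, mul_one] at h0
    simp_rw [hca] at h0
    rw [h0]
  have hyy2 : y ⬝ᵥ y = 1 / d s + 1 / d t := by
    have h1' : y ⬝ᵥ y = y ⬝ᵥ (1 : Matrix V V ℝ) *ᵥ y := by rw [Matrix.one_mulVec]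
    rw [h1', hy_def, aux_quad_entries]
    rw [Matrix.one_apply_eq, Matrix.one_apply_eq, Matrix.one_apply_ne hst,
      Matrix.one_apply_ne (Ne.symm hst)]
    rw [← hsqsq s, ← hsqsq t]
    field_simp
    simp
  rw [Finset.sum_congr rfl (fun ℓ _ => hsummand ℓ), Finset.sum_comm, hR]
  have key : ∑ i, g i * c i ^ 2 - ∑ i, ∑ ℓ ∈ Finset.range (L+1), c i ^ 2 * μ i ^ ℓ
      = ∑ i, c i ^ 2 * (g i - ∑ ℓ ∈ Finset.range (L+1), μ i ^ ℓ) := by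
    rw [← Finset.sum_sub_distrib]
    refine Finset.sum_congr rfl fun i _ => ?_
    rw [← Finset.mul_sum]; ring
  rw [key]
  have h1lam : (0:ℝ) < 1 - lam := by linarith
  set B : ℝ := lam^(L+1) / (1 - lam) with hB_def
  have hBpos : 0 ≤ B := by positivity
  have hbound : ∀ i : V, |c i ^ 2 * (g i - ∑ ℓ ∈ Finset.range (L+1), μ i ^ ℓ)|
      ≤ c i ^ 2 * B := by
    intro i
    by_cases hi : μ i = 1
    · rw [hctop i hi]
      simp [hBpos]
    · have hμlam : |μ i| ≤ lam := (hμi i).resolve_left hi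
      have hμub := abs_le.mp hμlam
      have h1μ : (0:ℝ) < 1 - μ i := by linarith [hμub.2]
      have hgeom : ∑ ℓ ∈ Finset.range (L+1), μ i ^ ℓ = (μ i ^ (L+1) - 1)/(μ i - 1) :=
        geom_sum_eq hi (L+1)
      have hdiff : g i - ∑ ℓ ∈ Finset.range (L+1), μ i ^ ℓ = μ i ^ (L+1) / (1 - μ i) := by
        rw [hgeom, hg_def]
        simp only [if_neg hi]
        have hne : (1:ℝ) - μ i ≠ 0 := h1μ.ne'
        have hne2 : μ i - 1 ≠ 0 := sub_ne_zero.mpr hi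
        field_simp
        ring
      rw [hdiff, abs_mul]
      have habs : |μ i ^ (L+1) / (1 - μ i)| = |μ i|^(L+1) / (1 - μ i) := by
        rw [abs_div, abs_pow, abs_of_pos h1μ]
      rw [habs, abs_of_nonneg (by positivity : (0:ℝ) ≤ c i ^ 2), hB_def]
      have hnum : |μ i|^(L+1) ≤ lam^(L+1) := pow_le_pow_left₀ (abs_nonneg _) hμlam _
      have hden : 1 - lam ≤ 1 - μ i := by
        have := le_trans (le_abs_self (μ i)) hμlam
        linarith
      have hdivle : |μ i|^(L+1)/(1 - μ i) ≤ lam^(L+1)/(1 - lam) :=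
        div_le_div₀ (by positivity) hnum h1lam hden
      exact mul_le_mul_of_nonneg_left hdivle (by positivity)
  calc |∑ i, c i ^ 2 * (g i - ∑ ℓ ∈ Finset.range (L+1), μ i ^ ℓ)|
      ≤ ∑ i, |c i ^ 2 * (g i - ∑ ℓ ∈ Finset.range (L+1), μ i ^ ℓ)| :=
        Finset.abs_sum_le_sum_abs _ _
    _ ≤ ∑ i, c i ^ 2 * B := Finset.sum_le_sum (fun i _ => hbound i)
    _ = (∑ i, c i ^ 2) * B := by rw [← Finset.sum_mul]
    _ = (1 / d s + 1 / d t) * B := by rw [hyy, hyy2]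
    _ ≤ ε / 2 := by
        refine aux_numeric lam ε (1 / d s + 1 / d t) hlam0 hlam1 hε ?_ L ?_
        · have := hd s; have := hd t; positivity
        · exact hL
end

section
/- Each term of the probabilistic expansion of effective resistance summed over two consecutive steps is nonnegative: for any nodes s, t and any even ℓ ≥ 0, (e_s−e_t)^T D^{-1}P^ℓ(e_s−e_t) + (e_s−e_t)^T D^{-1}P^{ℓ+1}(e_s−e_t) ≥ 0. -/
open Matrix Finset

section aux

variable {V : Type*} [Fintype V] [DecidableEq V]
    (G : SimpleGraph V) [DecidableRel G.Adj]

omit [DecidableEq V] in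
lemma adj_row_sum (v : V) :
    ∑ u, G.adjMatrix ℝ v u = (G.degree v : ℝ) := by
  simp only [SimpleGraph.adjMatrix_apply, Finset.sum_boole, SimpleGraph.degree,
    SimpleGraph.neighborFinset_eq_filter]

lemma DplusA_nonneg (z : V → ℝ) :
    0 ≤ (∑ v, (G.degree v : ℝ) * z v ^ 2) + z ⬝ᵥ (G.adjMatrix ℝ) *ᵥ z := by
  have hsym : ∀ v u, G.adjMatrix ℝ v u = G.adjMatrix ℝ u v := fun v u => by
    simp [SimpleGraph.adjMatrix_apply, SimpleGraph.adj_comm]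
  have h1 : ∑ v, ∑ u, G.adjMatrix ℝ v u * z v ^ 2
      = ∑ v, (G.degree v : ℝ) * z v ^ 2 := by
    refine Finset.sum_congr rfl fun v _ => ?_
    rw [← Finset.sum_mul, adj_row_sum]
  have h2 : ∑ v, ∑ u, G.adjMatrix ℝ v u * z u ^ 2
      = ∑ v, (G.degree v : ℝ) * z v ^ 2 := by
    rw [Finset.sum_comm]
    refine Finset.sum_congr rfl fun u _ => ?_
    simp_rw [fun v => hsym v u]
    rw [← Finset.sum_mul, adj_row_sum]
  have h3 : z ⬝ᵥ (G.adjMatrix ℝ) *ᵥ z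
      = ∑ v, ∑ u, G.adjMatrix ℝ v u * (z v * z u) := by
    simp [dotProduct, Matrix.mulVec, Finset.mul_sum]
  have expand : ∑ v, ∑ u, G.adjMatrix ℝ v u * (z v + z u) ^ 2
      = (∑ v, ∑ u, G.adjMatrix ℝ v u * z v ^ 2)
        + (∑ v, ∑ u, G.adjMatrix ℝ v u * z u ^ 2)
        + 2 * ∑ v, ∑ u, G.adjMatrix ℝ v u * (z v * z u) := by
    simp only [Finset.mul_sum, ← Finset.sum_add_distrib]
    exact Finset.sum_congr rfl fun v _ => Finset.sum_congr rfl fun u _ => by ring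
  have pos : 0 ≤ ∑ v, ∑ u, G.adjMatrix ℝ v u * (z v + z u) ^ 2 := by
    refine Finset.sum_nonneg fun v _ => Finset.sum_nonneg fun u _ => ?_
    exact mul_nonneg (by simp [SimpleGraph.adjMatrix_apply]; positivity) (sq_nonneg _)
  rw [h3]
  rw [expand, h1, h2] at pos
  linarith

end aux

section main

variable {V : Type*} [Fintype V] [DecidableEq V]
    (G : SimpleGraph V) [DecidableRel G.Adj]

lemma oneM_nonneg (hdeg : ∀ v : V, 0 < G.degree v) (y : V → ℝ) :
    0 ≤ y ⬝ᵥ ((1 : Matrix V V ℝ)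
        + (Matrix.diagonal fun v => (Real.sqrt (G.degree v))⁻¹) * G.adjMatrix ℝ
          * (Matrix.diagonal fun v => (Real.sqrt (G.degree v))⁻¹)) *ᵥ y := by
  set N : Matrix V V ℝ := Matrix.diagonal fun v => (Real.sqrt (G.degree v))⁻¹ with hN
  set z : V → ℝ := N *ᵥ y with hz
  have hNt : Nᵀ = N := Matrix.diagonal_transpose _
  have hqpos : ∀ v, (0:ℝ) < Real.sqrt (G.degree v) := fun v =>
    Real.sqrt_pos.mpr (by exact_mod_cast hdeg v)
  have hdotN : ∀ w : V → ℝ, y ⬝ᵥ N *ᵥ w = z ⬝ᵥ w := fun w => by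
    rw [Matrix.dotProduct_mulVec, ← hNt, Matrix.vecMul_transpose]
  have h1 : y ⬝ᵥ (N * G.adjMatrix ℝ * N) *ᵥ y = z ⬝ᵥ (G.adjMatrix ℝ) *ᵥ z := by
    rw [← Matrix.mulVec_mulVec, ← Matrix.mulVec_mulVec, hdotN,
      Matrix.dotProduct_mulVec, Matrix.dotProduct_mulVec]
  have h2 : y ⬝ᵥ (1 : Matrix V V ℝ) *ᵥ y = ∑ v, (G.degree v : ℝ) * z v ^ 2 := by
    rw [Matrix.one_mulVec]
    refine Finset.sum_congr rfl fun v _ => ?_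
    have hzv : z v = (Real.sqrt (G.degree v))⁻¹ * y v := by
      simp [hz, hN, Matrix.mulVec_diagonal]
    rw [hzv, mul_pow, inv_pow, Real.sq_sqrt (by positivity)]
    have hd : (G.degree v : ℝ) ≠ 0 := by exact_mod_cast (hdeg v).ne'
    field_simp
  rw [Matrix.add_mulVec, dotProduct_add, h1, h2]
  exact DplusA_nonneg G z

end main

/-- Two consecutive terms of the probabilistic expansion of effective
resistance are jointly nonnegative: for even `ℓ`,
`(e_s−e_t)ᵀ D⁻¹Pℓ (e_s−e_t) + (e_s−e_t)ᵀ D⁻¹Pℓ⁺¹ (e_s−e_t) ≥ 0`. -/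
theorem consecutive_terms_nonneg {V : Type*} [Fintype V] [DecidableEq V]
    (G : SimpleGraph V) [DecidableRel G.Adj]
    (hdeg : ∀ v : V, 0 < G.degree v) (s t : V) (ℓ : ℕ) (hℓ : Even ℓ) :
    0 ≤ (Pi.single s 1 - Pi.single t 1) ⬝ᵥ
          ((Matrix.diagonal fun v => (G.degree v : ℝ))⁻¹ * (transP G) ^ ℓ) *ᵥ
          (Pi.single s 1 - Pi.single t 1)
        + (Pi.single s 1 - Pi.single t 1) ⬝ᵥ
          ((Matrix.diagonal fun v => (G.degree v : ℝ))⁻¹ * (transP G) ^ (ℓ + 1)) *ᵥ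
          (Pi.single s 1 - Pi.single t 1) := by
  set A : Matrix V V ℝ := G.adjMatrix ℝ with hA
  set N : Matrix V V ℝ := Matrix.diagonal fun v => (Real.sqrt (G.degree v))⁻¹ with hN
  set M : Matrix V V ℝ := N * A * N with hM
  set x : V → ℝ := Pi.single s 1 - Pi.single t 1 with hx
  have hNN : (Matrix.diagonal fun v => (G.degree v : ℝ))⁻¹ = N * N := by
    refine Matrix.inv_eq_right_inv ?_
    rw [hN, Matrix.diagonal_mul_diagonal, Matrix.diagonal_mul_diagonal]
    have : (fun v => (G.degree v : ℝ) * ((Real.sqrt (G.degree v))⁻¹ * (Real.sqrt (G.degree v))⁻¹))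
        = fun _ => (1 : ℝ) := by
      funext v
      rw [← mul_inv, Real.mul_self_sqrt (by positivity)]
      exact mul_inv_cancel₀ (by exact_mod_cast (hdeg v).ne')
    rw [this, Matrix.diagonal_one]
  have htP : transP G = A * N * N := by
    rw [transP, hNN, ← hA, mul_assoc]
  have hcomm : ∀ k : ℕ, N * (A * N * N) ^ k = M ^ k * N := by
    intro k; induction k with
    | zero => simp
    | succ n ih =>
      rw [pow_succ', pow_succ']
      calc N * (A * N * N * (A * N * N) ^ n)
          = (N * A * N) * (N * (A * N * N) ^ n) := by noncomm_ring
        _ = (N * A * N) * (M ^ n * N) := by rw [ih]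
        _ = M * M ^ n * N := by rw [← hM]; exact (mul_assoc M (M ^ n) N).symm
  have key : ∀ k : ℕ, (Matrix.diagonal fun v => (G.degree v : ℝ))⁻¹ * (transP G) ^ k
      = N * M ^ k * N := by
    intro k
    rw [htP, hNN, mul_assoc, hcomm k, ← mul_assoc]
  have hMt : Mᵀ = M := by
    rw [hM, Matrix.transpose_mul, Matrix.transpose_mul, Matrix.diagonal_transpose, hA,
      (G.isSymm_adjMatrix).eq]
    noncomm_ring
  obtain ⟨k, hk⟩ := hℓ
  set B : Matrix V V ℝ := M ^ k * N with hB
  have hBt : Bᵀ = N * M ^ k := by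
    rw [hB, Matrix.transpose_mul, Matrix.diagonal_transpose, Matrix.transpose_pow, hMt]
  have e1 : N * M ^ ℓ * N = Bᵀ * ((1 : Matrix V V ℝ) * B) := by
    rw [hBt, hB, hk, pow_add, one_mul]; noncomm_ring
  have e2 : N * M ^ (ℓ + 1) * N = Bᵀ * (M * B) := by
    rw [hBt, hB, hk]
    have : M ^ (k + k + 1) = M ^ k * (M * M ^ k) := by
      rw [show k + k + 1 = k + (k + 1) by ring, pow_add, pow_succ']
    rw [this]; noncomm_ring
  rw [key ℓ, key (ℓ + 1), e1, e2]
  have combine : x ⬝ᵥ (Bᵀ * ((1 : Matrix V V ℝ) * B)) *ᵥ x + x ⬝ᵥ (Bᵀ * (M * B)) *ᵥ x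
      = (B *ᵥ x) ⬝ᵥ ((1 + M) *ᵥ (B *ᵥ x)) := by
    rw [← dotProduct_add, ← Matrix.add_mulVec, ← Matrix.mul_add, ← Matrix.add_mul,
      ← Matrix.mulVec_mulVec, ← Matrix.mulVec_mulVec, Matrix.dotProduct_mulVec x Bᵀ,
      Matrix.vecMul_transpose]
  rw [combine]
  exact oneM_nonneg G hdeg (B *ᵥ x)
end

section
/- Under the conditions of the forward push invariant, the random variable T̂_i (defined via two independent L-step random walks from s and from t) satisfies |T̂_i| ≤ 2(L+1) − Σ_{ℓ=0}^{L} Σ_{v∈V} (q_s^(ℓ)(v) + q_t^(ℓ)(v)). -/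
open Finset

/-- Key pointwise bound: a 0/1-weighted sum of signed residue differences over
degrees is bounded by the total mass of the positive residues. -/
lemma key_bound {V : Type*} [Fintype V] (d : V → ℝ) (hd : ∀ v, 0 ≤ d v)
    (X : V → ℝ) (hX : ∀ v, X v = 0 ∨ X v = 1)
    (R S : ℕ → V → ℝ) (n : ℕ)
    (hR0 : ∀ k v, 0 ≤ R k v) (hS0 : ∀ k v, 0 ≤ S k v)
    (hRd : ∀ k v, R k v / d v ≤ R k v) :
    ∑ v, X v * ∑ k ∈ Finset.range n, (R k v - S k v) / d v
      ≤ ∑ v, ∑ k ∈ Finset.range n, R k v := by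
  refine Finset.sum_le_sum fun v _ => ?_
  have hB : 0 ≤ ∑ k ∈ Finset.range n, R k v :=
    Finset.sum_nonneg fun k _ => hR0 k v
  rcases hX v with h | h
  · simp [h, hB]
  · rw [h, one_mul]
    refine Finset.sum_le_sum fun k _ => ?_
    have h1 : (R k v - S k v) / d v = R k v / d v - S k v / d v := by
      ring
    have h2 : 0 ≤ S k v / d v := div_nonneg (hS0 k v) (hd v)
    calc (R k v - S k v) / d v ≤ R k v / d v := by rw [h1]; linarith
      _ ≤ R k v := hRd k v

/-- Reserve-based bound on `T̂ᵢ`: under the total-mass identities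
`Σ_v Σ_{k=0}^{ℓ} r⁽ᵏ⁾(v) = 1 − Σ_v q⁽ℓ⁾(v)` (for the pushes from both `s` and
`t`), the random variable `T̂ᵢ` satisfies
`|T̂ᵢ| ≤ 2(L+1) − Σ_{ℓ=0}^{L} Σ_v (q_s⁽ℓ⁾(v) + q_t⁽ℓ⁾(v))`. -/
theorem Ti_bounded_by_reserves {V : Type*} [Fintype V] [DecidableEq V]
    (G : SimpleGraph V) [DecidableRel G.Adj]
    (hconn : G.Connected)
    (L : ℕ)
    (qs qt rs rt : ℕ → V → ℝ)
    (hqs0 : ∀ ℓ v, 0 ≤ qs ℓ v) (hqt0 : ∀ ℓ v, 0 ≤ qt ℓ v)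
    (hrs0 : ∀ k v, 0 ≤ rs k v) (hrt0 : ∀ k v, 0 ≤ rt k v)
    (hrs_div : ∀ k v, rs k v / (G.degree v : ℝ) ≤ rs k v)
    (hrt_div : ∀ k v, rt k v / (G.degree v : ℝ) ≤ rt k v)
    (hmass_s : ∀ ℓ ≤ L, ∑ v : V, ∑ k ∈ Finset.range (ℓ + 1), rs k v
        = 1 - ∑ v : V, qs ℓ v)
    (hmass_t : ∀ ℓ ≤ L, ∑ v : V, ∑ k ∈ Finset.range (ℓ + 1), rt k v
        = 1 - ∑ v : V, qt ℓ v)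
    (Xs Xt : ℕ → V → ℝ)
    (hXs01 : ∀ ℓ v, Xs ℓ v = 0 ∨ Xs ℓ v = 1)
    (hXt01 : ∀ ℓ v, Xt ℓ v = 0 ∨ Xt ℓ v = 1)
    (hXs1 : ∀ ℓ, ∑ v : V, Xs ℓ v = 1)
    (hXt1 : ∀ ℓ, ∑ v : V, Xt ℓ v = 1) :
    |∑ ℓ ∈ Finset.range (L + 1), ∑ v : V,
        Xs ℓ v * (∑ k ∈ Finset.range (L - ℓ + 1),
          (rs k v - rt k v) / (G.degree v : ℝ))
      + ∑ ℓ ∈ Finset.range (L + 1), ∑ v : V,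
        Xt ℓ v * (∑ k ∈ Finset.range (L - ℓ + 1),
          (rt k v - rs k v) / (G.degree v : ℝ))|
      ≤ 2 * ((L : ℝ) + 1)
        - ∑ ℓ ∈ Finset.range (L + 1), ∑ v : V, (qs ℓ v + qt ℓ v) := by
  set d : V → ℝ := fun v => (G.degree v : ℝ) with hd_def
  have hd : ∀ v, 0 ≤ d v := fun v => Nat.cast_nonneg _
  set A : ℕ → ℝ := fun ℓ => ∑ v : V,
      Xs ℓ v * (∑ k ∈ Finset.range (L - ℓ + 1), (rs k v - rt k v) / d v) with hA
  set B : ℕ → ℝ := fun ℓ => ∑ v : V,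
      Xt ℓ v * (∑ k ∈ Finset.range (L - ℓ + 1), (rt k v - rs k v) / d v) with hB
  have hterm : ∀ ℓ ∈ Finset.range (L + 1),
      |A ℓ + B ℓ| ≤ 2 - ∑ v : V, (qs (L - ℓ) v + qt (L - ℓ) v) := by
    intro ℓ hℓ
    have hℓL : L - ℓ ≤ L := Nat.sub_le _ _
    have hs := hmass_s (L - ℓ) hℓL
    have ht := hmass_t (L - ℓ) hℓL
    have hAle : A ℓ ≤ 1 - ∑ v : V, qs (L - ℓ) v := by
      rw [← hs]
      exact key_bound d hd (Xs ℓ) (hXs01 ℓ) rs rt (L - ℓ + 1) hrs0 hrt0 hrs_div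
    have hBle : B ℓ ≤ 1 - ∑ v : V, qt (L - ℓ) v := by
      rw [← ht]
      exact key_bound d hd (Xt ℓ) (hXt01 ℓ) rt rs (L - ℓ + 1) hrt0 hrs0 hrt_div
    have hAge : -A ℓ ≤ 1 - ∑ v : V, qt (L - ℓ) v := by
      have : -A ℓ = ∑ v : V,
          Xs ℓ v * (∑ k ∈ Finset.range (L - ℓ + 1), (rt k v - rs k v) / d v) := by
        rw [hA]
        rw [← Finset.sum_neg_distrib]
        refine Finset.sum_congr rfl fun v _ => ?_
        rw [← mul_neg, ← Finset.sum_neg_distrib]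
        congr 1
        refine Finset.sum_congr rfl fun k _ => ?_
        ring
      rw [this, ← ht]
      exact key_bound d hd (Xs ℓ) (hXs01 ℓ) rt rs (L - ℓ + 1) hrt0 hrs0 hrt_div
    have hBge : -B ℓ ≤ 1 - ∑ v : V, qs (L - ℓ) v := by
      have : -B ℓ = ∑ v : V,
          Xt ℓ v * (∑ k ∈ Finset.range (L - ℓ + 1), (rs k v - rt k v) / d v) := by
        rw [hB]
        rw [← Finset.sum_neg_distrib]
        refine Finset.sum_congr rfl fun v _ => ?_
        rw [← mul_neg, ← Finset.sum_neg_distrib]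
        congr 1
        refine Finset.sum_congr rfl fun k _ => ?_
        ring
      rw [this, ← hs]
      exact key_bound d hd (Xt ℓ) (hXt01 ℓ) rs rt (L - ℓ + 1) hrs0 hrt0 hrs_div
    rw [Finset.sum_add_distrib, abs_le]
    constructor <;> nlinarith [hAle, hBle, hAge, hBge]
  calc |∑ ℓ ∈ Finset.range (L + 1), A ℓ + ∑ ℓ ∈ Finset.range (L + 1), B ℓ|
      = |∑ ℓ ∈ Finset.range (L + 1), (A ℓ + B ℓ)| := by
        rw [Finset.sum_add_distrib]
    _ ≤ ∑ ℓ ∈ Finset.range (L + 1), |A ℓ + B ℓ| := Finset.abs_sum_le_sum_abs _ _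
    _ ≤ ∑ ℓ ∈ Finset.range (L + 1),
          (2 - ∑ v : V, (qs (L - ℓ) v + qt (L - ℓ) v)) :=
        Finset.sum_le_sum hterm
    _ = 2 * ((L : ℝ) + 1)
        - ∑ ℓ ∈ Finset.range (L + 1), ∑ v : V, (qs ℓ v + qt ℓ v) := by
        rw [Finset.sum_sub_distrib, Finset.sum_const, Finset.card_range]
        congr 1
        · push_cast; ring
        · have := Finset.sum_range_reflect
            (fun ℓ => ∑ v : V, (qs ℓ v + qt ℓ v)) (L + 1)
          simpa using this
end

section
/- The BiSPER estimator is unbiased: E[R̂_L(s,t)] = R_L(s,t), where R̂_L(s,t) = Σ_{ℓ=0}^{L}(q_s^(ℓ)(s)/d(s) − q_s^(ℓ)(t)/d(t) + q_t^(ℓ)(t)/d(t) − q_t^(ℓ)(s)/d(s)) + T̂(s,t), T̂(s,t) is the empirical mean of N i.i.d. samples T̂_i(s,t), and each T̂_i is built from independent L-step random walks from s and t. -/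
open Matrix Finset MeasureTheory

lemma tri_sum (g : ℕ → ℕ → ℝ) (L : ℕ) :
    ∑ ℓ ∈ Finset.range (L+1), ∑ k ∈ Finset.range (ℓ+1), g (ℓ - k) k
    = ∑ k ∈ Finset.range (L+1), ∑ m ∈ Finset.range (L - k + 1), g m k := by
  induction L with
  | zero => simp
  | succ L ih =>
    rw [Finset.sum_range_succ, ih,
      Finset.sum_range_succ (fun k => ∑ m ∈ Finset.range (L + 1 - k + 1), g m k),
      Finset.sum_range_succ (fun k => g (L + 1 - k) k)]
    have h : ∀ k ∈ Finset.range (L+1), ∑ m ∈ Finset.range (L+1-k+1), g m k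
        = ∑ m ∈ Finset.range (L-k+1), g m k + g (L+1-k) k := by
      intro k hk
      have hk' : k ≤ L := Nat.lt_succ_iff.mp (Finset.mem_range.mp hk)
      have he : L+1-k = L-k+1 := by omega
      rw [he, Finset.sum_range_succ]
    rw [Finset.sum_congr rfl h, Finset.sum_add_distrib]
    simp only [Nat.sub_self, Nat.zero_add, Finset.sum_range_one]
    abel

lemma key_sum {V : Type*} [Fintype V] [DecidableEq V]
    (G : SimpleGraph V) [DecidableRel G.Adj] (L : ℕ) (x : V) (q r : ℕ → V → ℝ)
    (hinv : ∀ ℓ u, stepProb G ℓ x u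
        = q ℓ u + ∑ k ∈ Finset.range (ℓ + 1), ∑ v : V,
            r (ℓ - k) v * stepProb G k v u)
    (hsym : ∀ ℓ (u v : V), stepProb G ℓ v u / (G.degree u : ℝ)
        = stepProb G ℓ u v / (G.degree v : ℝ)) (u : V) :
    ∑ ℓ ∈ Finset.range (L+1), stepProb G ℓ x u / (G.degree u : ℝ)
      = ∑ ℓ ∈ Finset.range (L+1), q ℓ u / (G.degree u : ℝ)
        + ∑ ℓ ∈ Finset.range (L+1), ∑ v : V,
            stepProb G ℓ u v * ((∑ m ∈ Finset.range (L - ℓ + 1), r m v) / (G.degree v : ℝ)) := by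
  have step1 : ∀ ℓ, stepProb G ℓ x u / (G.degree u : ℝ)
      = q ℓ u / (G.degree u : ℝ)
        + ∑ k ∈ Finset.range (ℓ + 1), ∑ v : V,
            r (ℓ - k) v * (stepProb G k v u / (G.degree u : ℝ)) := by
    intro ℓ
    rw [hinv ℓ u, add_div, Finset.sum_div]
    congr 1
    refine Finset.sum_congr rfl fun k _ => ?_
    rw [Finset.sum_div]
    exact Finset.sum_congr rfl fun v _ => (mul_div_assoc _ _ _)
  calc ∑ ℓ ∈ Finset.range (L+1), stepProb G ℓ x u / (G.degree u : ℝ)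
      = ∑ ℓ ∈ Finset.range (L+1), (q ℓ u / (G.degree u : ℝ)
          + ∑ k ∈ Finset.range (ℓ + 1), ∑ v : V,
              r (ℓ - k) v * (stepProb G k v u / (G.degree u : ℝ))) :=
        Finset.sum_congr rfl fun ℓ _ => step1 ℓ
    _ = ∑ ℓ ∈ Finset.range (L+1), q ℓ u / (G.degree u : ℝ)
          + ∑ ℓ ∈ Finset.range (L+1), ∑ k ∈ Finset.range (ℓ + 1), ∑ v : V,
              r (ℓ - k) v * (stepProb G k v u / (G.degree u : ℝ)) :=
        Finset.sum_add_distrib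
    _ = ∑ ℓ ∈ Finset.range (L+1), q ℓ u / (G.degree u : ℝ)
          + ∑ k ∈ Finset.range (L+1), ∑ m ∈ Finset.range (L - k + 1), ∑ v : V,
              r m v * (stepProb G k v u / (G.degree u : ℝ)) := by
        rw [tri_sum (fun m k => ∑ v : V, r m v * (stepProb G k v u / (G.degree u : ℝ))) L]
    _ = ∑ ℓ ∈ Finset.range (L+1), q ℓ u / (G.degree u : ℝ)
        + ∑ ℓ ∈ Finset.range (L+1), ∑ v : V,
            stepProb G ℓ u v * ((∑ m ∈ Finset.range (L - ℓ + 1), r m v) / (G.degree v : ℝ)) := by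
        congr 1
        refine Finset.sum_congr rfl fun k _ => ?_
        rw [Finset.sum_comm]
        refine Finset.sum_congr rfl fun v _ => ?_
        rw [← Finset.sum_mul, hsym k u v]
        ring

/-- Unbiasedness of the BiSPER estimator: `E[R̂_L(s,t)] = R_L(s,t)`, where
`R̂_L(s,t)` consists of the deterministic reserve part plus the empirical mean
of `N` samples `T̂ᵢ(s,t)` built from independent `L`-step random walks from
`s` and `t` (modeled by indicator random variables `Xs i ℓ v`, `Xt i ℓ v` with
`E[Xs i ℓ v] = p⁽ℓ⁾(s,v)` and `E[Xt i ℓ v] = p⁽ℓ⁾(t,v)`). -/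
theorem bisper_unbiased {V : Type*} [Fintype V] [DecidableEq V]
    (G : SimpleGraph V) [DecidableRel G.Adj]
    (hconn : G.Connected) (hdeg : ∀ v : V, 0 < G.degree v)
    {Ω : Type*} [MeasurableSpace Ω] (μ : Measure Ω) [IsProbabilityMeasure μ]
    (s t : V) (L N : ℕ) (hN : 0 < N)
    (qs qt rs rt : ℕ → V → ℝ)
    (Xs Xt : Fin N → ℕ → V → Ω → ℝ)
    (hint_s : ∀ i ℓ v, Integrable (Xs i ℓ v) μ)
    (hint_t : ∀ i ℓ v, Integrable (Xt i ℓ v) μ)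
    (hEs : ∀ i ℓ v, ∫ ω, Xs i ℓ v ω ∂μ = stepProb G ℓ s v)
    (hEt : ∀ i ℓ v, ∫ ω, Xt i ℓ v ω ∂μ = stepProb G ℓ t v)
    (hinv_s : ∀ ℓ u, stepProb G ℓ s u
        = qs ℓ u + ∑ k ∈ Finset.range (ℓ + 1), ∑ v : V,
            rs (ℓ - k) v * stepProb G k v u)
    (hinv_t : ∀ ℓ u, stepProb G ℓ t u
        = qt ℓ u + ∑ k ∈ Finset.range (ℓ + 1), ∑ v : V,
            rt (ℓ - k) v * stepProb G k v u)
    (hsym : ∀ ℓ (u v : V), stepProb G ℓ v u / (G.degree u : ℝ)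
        = stepProb G ℓ u v / (G.degree v : ℝ)) :
    ∫ ω,
        (∑ ℓ ∈ Finset.range (L + 1),
            (qs ℓ s / (G.degree s : ℝ) - qs ℓ t / (G.degree t : ℝ)
              + qt ℓ t / (G.degree t : ℝ) - qt ℓ s / (G.degree s : ℝ))
          + (1 / (N : ℝ)) * ∑ i : Fin N,
              (∑ ℓ ∈ Finset.range (L + 1), ∑ v : V,
                  Xs i ℓ v ω * (∑ k ∈ Finset.range (L - ℓ + 1),
                    (rs k v - rt k v) / (G.degree v : ℝ))
                + ∑ ℓ ∈ Finset.range (L + 1), ∑ v : V,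
                  Xt i ℓ v ω * (∑ k ∈ Finset.range (L - ℓ + 1),
                    (rt k v - rs k v) / (G.degree v : ℝ)))) ∂μ
      = ∑ ℓ ∈ Finset.range (L + 1),
          (stepProb G ℓ s s / (G.degree s : ℝ) - stepProb G ℓ s t / (G.degree t : ℝ)
            - stepProb G ℓ t s / (G.degree s : ℝ)
            + stepProb G ℓ t t / (G.degree t : ℝ)) := by

  classical
  -- abbreviations for the per-vertex residue coefficients
  have hds : ∀ i : Fin N, Integrable (fun ω =>
      ∑ ℓ ∈ Finset.range (L + 1), ∑ v : V,
          Xs i ℓ v ω * (∑ k ∈ Finset.range (L - ℓ + 1),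
            (rs k v - rt k v) / (G.degree v : ℝ))
        + ∑ ℓ ∈ Finset.range (L + 1), ∑ v : V,
          Xt i ℓ v ω * (∑ k ∈ Finset.range (L - ℓ + 1),
            (rt k v - rs k v) / (G.degree v : ℝ))) μ := by
    intro i
    exact (integrable_finset_sum _ fun ℓ _ =>
        integrable_finset_sum _ fun v _ => (hint_s i ℓ v).mul_const _).add
      (integrable_finset_sum _ fun ℓ _ =>
        integrable_finset_sum _ fun v _ => (hint_t i ℓ v).mul_const _)
  have hEF : ∀ i : Fin N, ∫ ω,
      (∑ ℓ ∈ Finset.range (L + 1), ∑ v : V,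
          Xs i ℓ v ω * (∑ k ∈ Finset.range (L - ℓ + 1),
            (rs k v - rt k v) / (G.degree v : ℝ))
        + ∑ ℓ ∈ Finset.range (L + 1), ∑ v : V,
          Xt i ℓ v ω * (∑ k ∈ Finset.range (L - ℓ + 1),
            (rt k v - rs k v) / (G.degree v : ℝ))) ∂μ
      = ∑ ℓ ∈ Finset.range (L + 1), ∑ v : V,
          stepProb G ℓ s v * (∑ k ∈ Finset.range (L - ℓ + 1),
            (rs k v - rt k v) / (G.degree v : ℝ))
        + ∑ ℓ ∈ Finset.range (L + 1), ∑ v : V,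
          stepProb G ℓ t v * (∑ k ∈ Finset.range (L - ℓ + 1),
            (rt k v - rs k v) / (G.degree v : ℝ)) := by
    intro i
    rw [integral_add
      (integrable_finset_sum _ fun ℓ _ =>
        integrable_finset_sum _ fun v _ => (hint_s i ℓ v).mul_const _)
      (integrable_finset_sum _ fun ℓ _ =>
        integrable_finset_sum _ fun v _ => (hint_t i ℓ v).mul_const _)]
    congr 1
    · rw [integral_finset_sum _ fun ℓ _ =>
        integrable_finset_sum _ fun v _ => (hint_s i ℓ v).mul_const _]
      refine Finset.sum_congr rfl fun ℓ _ => ?_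
      rw [integral_finset_sum _ fun v _ => (hint_s i ℓ v).mul_const _]
      refine Finset.sum_congr rfl fun v _ => ?_
      rw [integral_mul_const, hEs i ℓ v]
    · rw [integral_finset_sum _ fun ℓ _ =>
        integrable_finset_sum _ fun v _ => (hint_t i ℓ v).mul_const _]
      refine Finset.sum_congr rfl fun ℓ _ => ?_
      rw [integral_finset_sum _ fun v _ => (hint_t i ℓ v).mul_const _]
      refine Finset.sum_congr rfl fun v _ => ?_
      rw [integral_mul_const, hEt i ℓ v]
  rw [integral_add (integrable_const _)
    ((integrable_finset_sum _ fun i _ => hds i).const_mul _),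
    integral_const, integral_const_mul,
    integral_finset_sum _ fun i _ => hds i]
  simp only [measure_univ, ENNReal.toReal_one, probReal_univ, one_smul]
  rw [Finset.sum_congr rfl fun i _ => hEF i, Finset.sum_const, Finset.card_univ,
    Fintype.card_fin, nsmul_eq_mul]
  have hNne : (N : ℝ) ≠ 0 := Nat.cast_ne_zero.mpr hN.ne'
  rw [one_div, inv_mul_cancel_left₀ hNne]
  -- Now the deterministic identity
  have h1 := key_sum G L s qs rs hinv_s hsym s
  have h2 := key_sum G L s qs rs hinv_s hsym t
  have h3 := key_sum G L t qt rt hinv_t hsym s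
  have h4 := key_sum G L t qt rt hinv_t hsym t
  have hRHS : ∑ ℓ ∈ Finset.range (L + 1),
        (stepProb G ℓ s s / (G.degree s : ℝ) - stepProb G ℓ s t / (G.degree t : ℝ)
          - stepProb G ℓ t s / (G.degree s : ℝ)
          + stepProb G ℓ t t / (G.degree t : ℝ))
      = ∑ ℓ ∈ Finset.range (L + 1), stepProb G ℓ s s / (G.degree s : ℝ)
        - ∑ ℓ ∈ Finset.range (L + 1), stepProb G ℓ s t / (G.degree t : ℝ)
        - ∑ ℓ ∈ Finset.range (L + 1), stepProb G ℓ t s / (G.degree s : ℝ)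
        + ∑ ℓ ∈ Finset.range (L + 1), stepProb G ℓ t t / (G.degree t : ℝ) := by
    rw [Finset.sum_add_distrib, Finset.sum_sub_distrib, Finset.sum_sub_distrib]
  have hC : ∑ ℓ ∈ Finset.range (L + 1),
        (qs ℓ s / (G.degree s : ℝ) - qs ℓ t / (G.degree t : ℝ)
          + qt ℓ t / (G.degree t : ℝ) - qt ℓ s / (G.degree s : ℝ))
      = ∑ ℓ ∈ Finset.range (L + 1), qs ℓ s / (G.degree s : ℝ)
        - ∑ ℓ ∈ Finset.range (L + 1), qs ℓ t / (G.degree t : ℝ)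
        + ∑ ℓ ∈ Finset.range (L + 1), qt ℓ t / (G.degree t : ℝ)
        - ∑ ℓ ∈ Finset.range (L + 1), qt ℓ s / (G.degree s : ℝ) := by
    rw [Finset.sum_sub_distrib, Finset.sum_add_distrib, Finset.sum_sub_distrib]
  have hS : (∑ ℓ ∈ Finset.range (L + 1), ∑ v : V,
        stepProb G ℓ s v * (∑ k ∈ Finset.range (L - ℓ + 1),
          (rs k v - rt k v) / (G.degree v : ℝ)))
      + ∑ ℓ ∈ Finset.range (L + 1), ∑ v : V,
        stepProb G ℓ t v * (∑ k ∈ Finset.range (L - ℓ + 1),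
          (rt k v - rs k v) / (G.degree v : ℝ))
      = (∑ ℓ ∈ Finset.range (L + 1), ∑ v : V,
          stepProb G ℓ s v * ((∑ m ∈ Finset.range (L - ℓ + 1), rs m v) / (G.degree v : ℝ)))
        - (∑ ℓ ∈ Finset.range (L + 1), ∑ v : V,
          stepProb G ℓ t v * ((∑ m ∈ Finset.range (L - ℓ + 1), rs m v) / (G.degree v : ℝ)))
        - (∑ ℓ ∈ Finset.range (L + 1), ∑ v : V,
          stepProb G ℓ s v * ((∑ m ∈ Finset.range (L - ℓ + 1), rt m v) / (G.degree v : ℝ)))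
        + ∑ ℓ ∈ Finset.range (L + 1), ∑ v : V,
          stepProb G ℓ t v * ((∑ m ∈ Finset.range (L - ℓ + 1), rt m v) / (G.degree v : ℝ)) := by
    rw [← Finset.sum_add_distrib, ← Finset.sum_sub_distrib, ← Finset.sum_sub_distrib,
      ← Finset.sum_add_distrib]
    refine Finset.sum_congr rfl fun ℓ _ => ?_
    rw [← Finset.sum_add_distrib, ← Finset.sum_sub_distrib, ← Finset.sum_sub_distrib,
      ← Finset.sum_add_distrib]
    refine Finset.sum_congr rfl fun v _ => ?_
    simp only [sub_div, Finset.sum_sub_distrib, Finset.sum_div]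
    ring
  linarith [hRHS, hC, hS, h1, h2, h3, h4]
end

section
/- In a connected non-bipartite undirected graph, the effective resistance admits the spectral bound R(s,t) ≤ (1/d(s) + 1/d(t))·(1/(1−λ))·2, where λ = max{λ_2, |λ_n|} < 1 is the second-largest eigenvalue modulus of the transition matrix P restricted away from the top eigenvector. -/
open Matrix Finset

section Aux

variable {n : Type*} [Fintype n] [DecidableEq n]

private lemma sum_dot' (f : n → (n → ℝ)) (z : n → ℝ) :
    (∑ i, f i) ⬝ᵥ z = ∑ i, f i ⬝ᵥ z := by
  simp only [dotProduct, Finset.sum_apply, Finset.sum_mul]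
  exact Finset.sum_comm

private lemma dot_sum' (z : n → ℝ) (f : n → (n → ℝ)) :
    z ⬝ᵥ (∑ i, f i) = ∑ i, z ⬝ᵥ f i := by
  simp only [dotProduct, Finset.sum_apply, Finset.mul_sum]
  exact Finset.sum_comm

private lemma pow_mulVec_eig {S : Matrix n n ℝ} (hS : S.IsHermitian) (i : n) (ℓ : ℕ) :
    (S ^ ℓ) *ᵥ ⇑(hS.eigenvectorBasis i) = (hS.eigenvalues i ^ ℓ) • ⇑(hS.eigenvectorBasis i) := by
  induction ℓ with
  | zero => simp
  | succ ℓ ih =>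
      rw [pow_succ, ← mulVec_mulVec, hS.mulVec_eigenvectorBasis, mulVec_smul, ih,
        smul_smul, ← pow_succ']

private lemma quad_expand {S : Matrix n n ℝ} (hS : S.IsHermitian) (y : n → ℝ) (ℓ : ℕ) :
    y ⬝ᵥ (S ^ ℓ) *ᵥ y = ∑ i, hS.eigenvalues i ^ ℓ * (⇑(hS.eigenvectorBasis i) ⬝ᵥ y) ^ 2 := by
  set b := hS.eigenvectorBasis with hb
  have hy : y = ∑ i, (⇑(b i) ⬝ᵥ y) • ⇑(b i) := by
    have h := congrArg WithLp.ofLp (b.sum_repr' (WithLp.toLp 2 y))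
    simp only [WithLp.ofLp_sum, WithLp.ofLp_smul, EuclideanSpace.inner_eq_star_dotProduct,
      star_trivial, WithLp.ofLp_toLp] at h
    exact h.symm.trans (Finset.sum_congr rfl fun i _ => by rw [dotProduct_comm])
  have horth : ∀ i j, ⇑(b i) ⬝ᵥ ⇑(b j) = if i = j then 1 else 0 := fun i j => by
    have := orthonormal_iff_ite.mp b.orthonormal i j
    rwa [EuclideanSpace.inner_eq_star_dotProduct, star_trivial, dotProduct_comm] at this
  have hmv : (S ^ ℓ) *ᵥ y = ∑ i, ((⇑(b i) ⬝ᵥ y) * hS.eigenvalues i ^ ℓ) • ⇑(b i) := by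
    nth_rewrite 1 [hy]
    have h1 : S ^ ℓ *ᵥ (∑ i, (⇑(b i) ⬝ᵥ y) • ⇑(b i)) =
        ∑ i, S ^ ℓ *ᵥ ((⇑(b i) ⬝ᵥ y) • ⇑(b i)) := by
      simpa only [mulVecLin_apply] using
        map_sum ((S ^ ℓ).mulVecLin) (fun i => (⇑(b i) ⬝ᵥ y) • ⇑(b i)) univ
    rw [h1]
    refine Finset.sum_congr rfl fun i _ => ?_
    rw [mulVec_smul, pow_mulVec_eig hS, smul_smul]
  nth_rewrite 1 [hy]
  rw [hmv, sum_dot']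
  refine Finset.sum_congr rfl fun i _ => ?_
  rw [smul_dotProduct, dot_sum']
  simp only [dotProduct_smul, horth, smul_eq_mul, mul_ite, mul_one, mul_zero,
    Finset.sum_ite_eq', Finset.sum_ite_eq, Finset.mem_univ, if_true]
  ring

/-- Spectral bound on the quadratic form `y ⬝ S^ℓ y`. -/
private lemma term_bound {S : Matrix n n ℝ} (hS : S.IsHermitian) (y : n → ℝ)
    {lam : ℝ} (hlam0 : 0 ≤ lam)
    (h : ∀ i, |hS.eigenvalues i| ≤ lam ∨ ⇑(hS.eigenvectorBasis i) ⬝ᵥ y = 0) (ℓ : ℕ) :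
    |y ⬝ᵥ (S ^ ℓ) *ᵥ y| ≤ lam ^ ℓ * (y ⬝ᵥ y) := by
  have hyy : y ⬝ᵥ y = ∑ i, (⇑(hS.eigenvectorBasis i) ⬝ᵥ y) ^ 2 := by
    have := quad_expand hS y 0
    simpa using this
  rw [quad_expand hS y ℓ, hyy, Finset.mul_sum]
  refine (Finset.abs_sum_le_sum_abs _ _).trans (Finset.sum_le_sum fun i _ => ?_)
  rcases h i with hi | hi
  · rw [abs_mul, abs_pow, abs_sq]
    have h2 : (0:ℝ) ≤ (⇑(hS.eigenvectorBasis i) ⬝ᵥ y) ^ 2 := sq_nonneg _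
    exact mul_le_mul_of_nonneg_right (pow_le_pow_left₀ (abs_nonneg _) hi ℓ) h2
  · rw [hi]
    simp [pow_nonneg hlam0]

end Aux

/-- Spectral bound on effective resistance: in a connected non-bipartite graph
whose non-top eigenvalues of `P` are bounded in modulus by `λ < 1`,
`R(s,t) = Σ_ℓ (e_s−e_t)ᵀ D⁻¹Pℓ (e_s−e_t) ≤ (1/d(s)+1/d(t))·(1/(1−λ))·2`. -/
theorem effectiveResistance_spectral_bound {V : Type*} [Fintype V] [DecidableEq V]
    (G : SimpleGraph V) [DecidableRel G.Adj]
    (hconn : G.Connected) (hnb : ¬ G.Colorable 2)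
    (lam : ℝ) (hlam0 : 0 ≤ lam) (hlam1 : lam < 1)
    (hspec : ∀ μ ∈ spectrum ℝ (transP G), μ = 1 ∨ |μ| ≤ lam)
    (s t : V) :
    (∑' ℓ : ℕ,
        (Pi.single s 1 - Pi.single t 1) ⬝ᵥ
          ((Matrix.diagonal fun v => (G.degree v : ℝ))⁻¹ * (transP G) ^ ℓ) *ᵥ
          (Pi.single s 1 - Pi.single t 1))
      ≤ (1 / (G.degree s : ℝ) + 1 / (G.degree t : ℝ)) * (1 / (1 - lam)) * 2 := by
  have h1lam : (0:ℝ) < 1 - lam := by linarith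
  have hrhs0 : (0:ℝ) ≤ (1 / (G.degree s : ℝ) + 1 / (G.degree t : ℝ)) * (1 / (1 - lam)) * 2 := by
    have h1 : (0:ℝ) ≤ 1 / (G.degree s : ℝ) + 1 / (G.degree t : ℝ) := by positivity
    have h2 : (0:ℝ) ≤ 1 / (1 - lam) := le_of_lt (by positivity)
    positivity
  by_cases hst : s = t
  · subst hst
    rw [sub_self]
    simp only [zero_dotProduct, tsum_zero]
    exact hrhs0
  -- nontriviality and degrees
  have hV : Nontrivial V := by
    by_contra h
    rw [not_nontrivial_iff_subsingleton] at h
    exact hnb ⟨⟨fun _ => (0 : Fin 2), fun {a b} hab =>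
      absurd (Subsingleton.elim a b) (G.ne_of_adj hab)⟩⟩
  have hdeg : ∀ v : V, 0 < G.degree v := by
    intro v
    obtain ⟨u, hu⟩ := exists_ne v
    obtain ⟨p⟩ := hconn.preconnected v u
    cases p with
    | nil => exact absurd rfl hu.symm
    | cons h _ => exact (G.degree_pos_iff_exists_adj v).mpr ⟨_, h⟩
  set d : V → ℝ := fun v => (G.degree v : ℝ) with hd_def
  have hd : ∀ v, 0 < d v := fun v => Nat.cast_pos.mpr (hdeg v)
  set q : V → ℝ := fun v => Real.sqrt (d v) with hq_def
  have hq : ∀ v, 0 < q v := fun v => Real.sqrt_pos.mpr (hd v)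
  have hq2 : ∀ v, q v * q v = d v := fun v => Real.mul_self_sqrt (hd v).le
  set Dh : Matrix V V ℝ := Matrix.diagonal q with hDh_def
  set Dih : Matrix V V ℝ := Matrix.diagonal (fun v => (q v)⁻¹) with hDih_def
  set S : Matrix V V ℝ := Dih * G.adjMatrix ℝ * Dih with hS_def
  have hS : S.IsHermitian := by
    have hA : (G.adjMatrix ℝ).IsHermitian := by
      rw [Matrix.IsHermitian, conjTranspose_eq_transpose_of_trivial]
      exact G.isSymm_adjMatrix
    have hDihh : Dih.IsHermitian := isHermitian_diagonal _
    rw [Matrix.IsHermitian, conjTranspose_mul, conjTranspose_mul, hA.eq, hDihh.eq,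
      ← mul_assoc]
  -- basic diagonal algebra
  have hDihDh : Dih * Dh = 1 := by
    rw [hDih_def, hDh_def, diagonal_mul_diagonal]
    have : (fun v => (q v)⁻¹ * q v) = fun _ => (1:ℝ) :=
      funext fun v => inv_mul_cancel₀ (hq v).ne'
    rw [this, diagonal_one]
  have hDhDih : Dh * Dih = 1 := by
    rw [hDh_def, hDih_def, diagonal_mul_diagonal]
    have : (fun v => q v * (q v)⁻¹) = fun _ => (1:ℝ) :=
      funext fun v => mul_inv_cancel₀ (hq v).ne'
    rw [this, diagonal_one]
  have hDih2 : Dih * Dih = Matrix.diagonal (fun v => (d v)⁻¹) := by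
    rw [hDih_def, diagonal_mul_diagonal]
    have : (fun v => (q v)⁻¹ * (q v)⁻¹) = fun v => (d v)⁻¹ :=
      funext fun v => by rw [← mul_inv, hq2]
    rw [this]
  have hDinv : (Matrix.diagonal d)⁻¹ = Matrix.diagonal (fun v => (d v)⁻¹) := by
    apply inv_eq_right_inv
    rw [diagonal_mul_diagonal]
    have : (fun v => d v * (d v)⁻¹) = fun _ => (1:ℝ) :=
      funext fun v => mul_inv_cancel₀ (hd v).ne'
    rw [this, diagonal_one]
  have hP : transP G = Dh * S * Dih := by
    rw [transP, hDinv, hS_def]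
    calc G.adjMatrix ℝ * Matrix.diagonal (fun v => (d v)⁻¹)
        = G.adjMatrix ℝ * (Dih * Dih) := by rw [hDih2]
      _ = 1 * G.adjMatrix ℝ * Dih * Dih := by rw [one_mul, mul_assoc]
      _ = Dh * Dih * G.adjMatrix ℝ * Dih * Dih := by rw [hDhDih]
      _ = Dh * (Dih * G.adjMatrix ℝ * Dih) * Dih := by simp only [mul_assoc]
  have hPpow : ∀ ℓ : ℕ, transP G ^ ℓ = Dh * S ^ ℓ * Dih := by
    intro ℓ
    induction ℓ with
    | zero => rw [pow_zero, pow_zero, mul_one, hDhDih]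
    | succ ℓ ih =>
        rw [pow_succ, pow_succ, ih, hP]
        calc Dh * S ^ ℓ * Dih * (Dh * S * Dih)
            = Dh * S ^ ℓ * (Dih * Dh) * S * Dih := by simp only [mul_assoc]
          _ = Dh * (S ^ ℓ * S) * Dih := by rw [hDihDh, mul_one]; simp only [← mul_assoc]
  have hkey : ∀ ℓ : ℕ, (Matrix.diagonal d)⁻¹ * transP G ^ ℓ = Dih * S ^ ℓ * Dih := by
    intro ℓ
    rw [hDinv, hPpow, ← hDih2]
    calc Dih * Dih * (Dh * S ^ ℓ * Dih)
        = Dih * (Dih * Dh) * S ^ ℓ * Dih := by simp only [mul_assoc]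
      _ = Dih * S ^ ℓ * Dih := by rw [hDihDh, mul_one]
  -- the vectors
  set x : V → ℝ := Pi.single s 1 - Pi.single t 1 with hx_def
  set y : V → ℝ := fun v => (q v)⁻¹ * x v with hy_def
  have hDihx : Dih *ᵥ x = y := funext fun v => mulVec_diagonal _ _ _
  have hterm : ∀ ℓ : ℕ, x ⬝ᵥ ((Matrix.diagonal d)⁻¹ * transP G ^ ℓ) *ᵥ x
      = y ⬝ᵥ (S ^ ℓ) *ᵥ y := by
    intro ℓ
    rw [hkey, ← mulVec_mulVec, ← mulVec_mulVec, hDihx]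
    have : ∀ z : V → ℝ, x ⬝ᵥ Dih *ᵥ z = y ⬝ᵥ z := by
      intro z
      simp only [dotProduct, hDih_def, mulVec_diagonal, hy_def]
      exact Finset.sum_congr rfl fun v _ => by ring
    rw [this]
  -- evaluation of x-coordinates
  have hxs : x s = 1 := by simp [hx_def, Pi.single_apply, hst]
  have hxt : x t = -1 := by simp [hx_def, Pi.single_apply, Ne.symm hst]
  have hxo : ∀ v, v ≠ s → v ≠ t → x v = 0 := by
    intro v hvs hvt
    simp [hx_def, Pi.single_apply, hvs, hvt]
  -- ‖y‖²
  have hyy : y ⬝ᵥ y = (d s)⁻¹ + (d t)⁻¹ := by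
    have hfun : (fun v => y v * y v) = Pi.single s (d s)⁻¹ + Pi.single t (d t)⁻¹ := by
      funext v
      by_cases hvs : v = s
      · subst hvs
        simp [hy_def, hxs, Pi.single_apply, hst, ← hq2]
      · by_cases hvt : v = t
        · subst hvt
          simp [hy_def, hxt, Pi.single_apply, hvs, ← hq2]
        · simp [hy_def, hxo v hvs hvt, Pi.single_apply, hvs, hvt]
    rw [dotProduct, hfun]
    simp only [Pi.add_apply]
    rw [Finset.sum_add_distrib, Finset.sum_pi_single', Finset.sum_pi_single']
    simp
  -- orthogonality to q
  have hqy : q ⬝ᵥ y = 0 := by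
    have hfun : (fun v => q v * y v) = x := by
      funext v
      rw [hy_def]
      rw [← mul_assoc, mul_inv_cancel₀ (hq v).ne', one_mul]
    rw [dotProduct]
    rw [show (∑ v, q v * y v) = ∑ v, x v from Finset.sum_congr rfl fun v _ => congrFun hfun v]
    rw [hx_def]
    simp only [Pi.sub_apply]
    rw [Finset.sum_sub_distrib, Finset.sum_pi_single', Finset.sum_pi_single']
    simp
  -- eigenvectors of eigenvalue 1 are multiples of q
  have hone : ∀ w : V → ℝ, S *ᵥ w = w → ∃ c : ℝ, w = c • q := by
    intro w hw
    set f : V → ℝ := fun v => (q v)⁻¹ * w v with hf_def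
    have hharm : ∀ v, ∑ u ∈ G.neighborFinset v, f u = d v * f v := by
      intro v
      have h1 : (S *ᵥ w) v = w v := congrFun hw v
      rw [hS_def, ← mulVec_mulVec, ← mulVec_mulVec] at h1
      have h2 : Dih *ᵥ w = f := funext fun u => mulVec_diagonal _ _ _
      rw [h2] at h1
      have h3 : (Dih *ᵥ (G.adjMatrix ℝ *ᵥ f)) v = (q v)⁻¹ * (G.adjMatrix ℝ *ᵥ f) v :=
        mulVec_diagonal _ _ _
      rw [h3, SimpleGraph.adjMatrix_mulVec_apply] at h1
      have h4 : (∑ u ∈ G.neighborFinset v, f u) = q v * w v := by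
        have h5 := congrArg (fun r => q v * r) h1
        simpa [← mul_assoc, mul_inv_cancel₀ (hq v).ne'] using h5
      rw [h4, hf_def]
      rw [← hq2 v, mul_assoc]
      congr 1
      rw [← mul_assoc, mul_inv_cancel₀ (hq v).ne', one_mul]
    obtain ⟨v₀, -, hmax⟩ := Finset.exists_max_image Finset.univ f univ_nonempty
    have hstep : ∀ a b : V, G.Adj a b → f a = f v₀ → f b = f v₀ := by
      intro a b hab ha
      have hsum : ∑ u ∈ G.neighborFinset a, (f v₀ - f u) = 0 := by
        rw [Finset.sum_sub_distrib, hharm a, ha, Finset.sum_const,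
          G.card_neighborFinset_eq_degree, nsmul_eq_mul]
        rw [show ((G.degree a : ℝ)) = d a from rfl, sub_self]
      have hzero := (Finset.sum_eq_zero_iff_of_nonneg
        (fun u _ => sub_nonneg.mpr (hmax u (Finset.mem_univ u)))).mp hsum
      have hb := hzero b ((G.mem_neighborFinset a b).mpr hab)
      linarith [sub_eq_zero.mp hb]
    have hwalk : ∀ (a c : V) (p : G.Walk a c), f a = f v₀ → f c = f v₀ := by
      intro a c p
      induction p with
      | nil => exact id
      | cons h p ih => exact fun ha => ih (hstep _ _ h ha)
    have hconst : ∀ v, f v = f v₀ := by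
      intro v
      obtain ⟨p⟩ := hconn.preconnected v₀ v
      exact hwalk _ _ p rfl
    refine ⟨f v₀, funext fun v => ?_⟩
    have : w v = q v * f v := by
      rw [hf_def, ← mul_assoc, mul_inv_cancel₀ (hq v).ne', one_mul]
    rw [this, hconst v]
    simp [mul_comm]
  -- eigenvalues of S lie in the spectrum of transP
  have heig : ∀ i : V, hS.eigenvalues i = 1 ∨ |hS.eigenvalues i| ≤ lam := by
    intro i
    apply hspec
    set vi : V → ℝ := ⇑(hS.eigenvectorBasis i) with hvi_def
    have hvi : S *ᵥ vi = hS.eigenvalues i • vi := hS.mulVec_eigenvectorBasis i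
    set u : V → ℝ := Dh *ᵥ vi with hu_def
    have hPu : transP G *ᵥ u = hS.eigenvalues i • u := by
      rw [hP, hu_def, mulVec_mulVec, mul_assoc (Dh * S) Dih Dh, hDihDh, mul_one,
        ← mulVec_mulVec, hvi, mulVec_smul]
    have hvine : vi ≠ 0 := by
      intro h0
      have h1 : hS.eigenvectorBasis i = 0 := (WithLp.equiv 2 (V → ℝ)).injective h0
      exact hS.eigenvectorBasis.orthonormal.ne_zero i h1
    obtain ⟨v, hv⟩ := Function.ne_iff.mp hvine
    have hu0 : u ≠ 0 := by
      intro h0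
      apply hv
      have huv : u v = q v * vi v := mulVec_diagonal _ _ _
      have h2 : q v * vi v = 0 := by
        rw [← huv, h0]
        rfl
      rcases mul_eq_zero.mp h2 with h3 | h3
      · exact absurd h3 (hq v).ne'
      · exact h3
    have hmem : hS.eigenvalues i ∈ spectrum ℝ (Matrix.toLinAlgEquiv' (transP G)) := by
      apply Module.End.HasEigenvalue.mem_spectrum
      apply Module.End.hasEigenvalue_of_hasEigenvector (x := u)
      refine ⟨Module.End.mem_eigenspace_iff.mpr ?_, hu0⟩
      rw [Matrix.toLinAlgEquiv'_apply]
      exact hPu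
    rwa [AlgEquiv.spectrum_eq] at hmem
  have hzero : ∀ i : V, hS.eigenvalues i = 1 → ⇑(hS.eigenvectorBasis i) ⬝ᵥ y = 0 := by
    intro i h1
    have hvi : S *ᵥ ⇑(hS.eigenvectorBasis i) = ⇑(hS.eigenvectorBasis i) := by
      rw [hS.mulVec_eigenvectorBasis i, h1, one_smul]
    obtain ⟨c, hc⟩ := hone _ hvi
    rw [hc, smul_dotProduct, hqy, smul_zero]
  have hcond : ∀ i : V, |hS.eigenvalues i| ≤ lam ∨ ⇑(hS.eigenvectorBasis i) ⬝ᵥ y = 0 := by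
    intro i
    rcases heig i with h | h
    · exact Or.inr (hzero i h)
    · exact Or.inl h
  set C : ℝ := (d s)⁻¹ + (d t)⁻¹ with hC_def
  have hC0 : 0 ≤ C := by
    rw [hC_def]
    have := (hd s).le
    have := (hd t).le
    positivity
  have habs : ∀ ℓ : ℕ, |x ⬝ᵥ ((Matrix.diagonal d)⁻¹ * transP G ^ ℓ) *ᵥ x| ≤ lam ^ ℓ * C := by
    intro ℓ
    rw [hterm ℓ]
    have h2 := term_bound hS y hlam0 hcond ℓ
    rwa [hyy] at h2
  have hgs : Summable (fun ℓ : ℕ => lam ^ ℓ * C) :=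
    (summable_geometric_of_lt_one hlam0 hlam1).mul_right C
  have hsa : Summable (fun ℓ : ℕ => x ⬝ᵥ ((Matrix.diagonal d)⁻¹ * transP G ^ ℓ) *ᵥ x) := by
    apply Summable.of_abs
    exact Summable.of_nonneg_of_le (fun _ => abs_nonneg _) habs hgs
  have hle : (∑' ℓ : ℕ, x ⬝ᵥ ((Matrix.diagonal d)⁻¹ * transP G ^ ℓ) *ᵥ x)
      ≤ ∑' ℓ : ℕ, lam ^ ℓ * C :=
    Summable.tsum_le_tsum (fun ℓ => (le_abs_self _).trans (habs ℓ)) hsa hgs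
  have hgeo : (∑' ℓ : ℕ, lam ^ ℓ * C) = (1 - lam)⁻¹ * C := by
    rw [tsum_mul_right, tsum_geometric_of_lt_one hlam0 hlam1]
  have hCeq : (1 / (G.degree s : ℝ) + 1 / (G.degree t : ℝ)) = C := by
    rw [hC_def, one_div, one_div]
  rw [hCeq]
  refine (hle.trans_eq hgeo).trans ?_
  rw [one_div]
  nlinarith [mul_nonneg (inv_nonneg.mpr h1lam.le) hC0]
end
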